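/- arXiv:1602.07779 — 2 statements merged into one kernel-verified Lean document; each statement's English description precedes it below -/
import Mathlib

section
/- Let G = (V,E) be a directed graph that is locally finite, simple, and strongly connected, and let x, y be two vertices of G. Then the function α ↦ κ_α(x, y) is concave on the interval [0, 1). -/
open Filter Set Topology

variable {V : Type*}

/-- The out-neighborhood of a vertex. -/
def outN (E : V → V → Prop) (x : V) : Set V := {y | E x y}

/-- The in-neighborhood of a vertex. -/
def inN (E : V → V → Prop) (x : V) : Set V := {y | E y x}

/-- The neighborhood `Γ(x) = Γ^in(x) ∪ Γ^out(x)` of a vertex. -/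
def nbhd (E : V → V → Prop) (x : V) : Set V := inN E x ∪ outN E x

/-- The degree `d_x = |Γ(x)|`. -/
noncomputable def deg (E : V → V → Prop) (x : V) : ℕ := (nbhd E x).ncard

/-- The out-degree `d_x^out = |Γ^out(x)|`. -/
noncomputable def outDeg (E : V → V → Prop) (x : V) : ℕ := (outN E x).ncard

/-- The in-degree `d_x^in = |Γ^in(x)|`. -/
noncomputable def inDeg (E : V → V → Prop) (x : V) : ℕ := (inN E x).ncard

/-- A directed graph is locally finite if every vertex has finite degree. -/
def LocFin (E : V → V → Prop) : Prop := ∀ x, (nbhd E x).Finite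

/-- A directed graph (with edges given by a relation, hence no multi-edges) is simple when
it has no loops. -/
def NoLoops (E : V → V → Prop) : Prop := ∀ x, ¬ E x x

/-- `f 0, f 1, …, f n` is a directed walk of length `n` (consecutive pairs are edges). -/
def IsDiWalk (E : V → V → Prop) (n : ℕ) (f : ℕ → V) : Prop := ∀ i, i < n → E (f i) (f (i + 1))

/-- A directed graph is strongly connected if for any two vertices there exists a
directed path (of length at least one) from one to the other. -/
def StronglyConnected (E : V → V → Prop) : Prop :=
  ∀ x y : V, ∃ n, 1 ≤ n ∧ ∃ f : ℕ → V, f 0 = x ∧ f n = y ∧ IsDiWalk E n f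

/-- The distance `d(x,y)`: the length of a shortest directed path from `x` to `y`. -/
noncomputable def ddist (E : V → V → Prop) (x y : V) : ℕ :=
  sInf {n : ℕ | ∃ f : ℕ → V, f 0 = x ∧ f n = y ∧ IsDiWalk E n f}

open Classical in
/-- The probability measure `m_x^α`. -/
noncomputable def mAlpha (E : V → V → Prop) (α : ℝ) (x : V) : V → ℝ := fun v =>
  if v = x then α + (1 - α) * (inDeg E x : ℝ) / (deg E x : ℝ)
  else if E x v then (1 - α) / (deg E x : ℝ)
  else 0

/-- A coupling between `m_x^α` and `m_y^α`: a map `A : V × V → [0,1]` (of finite support)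
whose marginals are `m_x^α` and `m_y^α`. -/
def IsCoupling (E : V → V → Prop) (α : ℝ) (x y : V) (A : V → V → ℝ) : Prop :=
  (Function.support fun p : V × V => A p.1 p.2).Finite ∧
  (∀ u v, A u v ∈ Set.Icc (0 : ℝ) 1) ∧
  (∀ u, ∑ᶠ v, A u v = mAlpha E α x u) ∧
  (∀ v, ∑ᶠ u, A u v = mAlpha E α y v)

/-- The 1-Wasserstein distance `W(m_x^α, m_y^α)`. -/
noncomputable def Wass (E : V → V → Prop) (α : ℝ) (x y : V) : ℝ :=
  sInf {w : ℝ | ∃ A : V → V → ℝ, IsCoupling E α x y A ∧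
    w = ∑ᶠ u, ∑ᶠ v, A u v * (ddist E u v : ℝ)}

/-- The α-Ricci curvature `κ_α(x,y) = 1 − W(m_x^α, m_y^α)/d(x,y)`. -/
noncomputable def ricciAlpha (E : V → V → Prop) (α : ℝ) (x y : V) : ℝ :=
  1 - Wass E α x y / (ddist E x y : ℝ)

/-- `RicciTendsto E x y k` means the Ricci curvature `κ(x,y) = lim_{α→1} κ_α(x,y)/(1−α)`
exists and equals `k`. -/
def RicciTendsto (E : V → V → Prop) (x y : V) (k : ℝ) : Prop :=
  Tendsto (fun α : ℝ => ricciAlpha E α x y / (1 - α)) (𝓝[<] (1 : ℝ)) (𝓝 k)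

/-- A directed graph is Ricci-flat if `κ(x,y) = 0` for every edge `(x,y)`. -/
def RicciFlat (E : V → V → Prop) : Prop := ∀ x y : V, E x y → RicciTendsto E x y 0

section AuxMCR

open Function Set

variable {V : Type*}

/-- ratio `(d^in + d^out)/d` for a vertex. -/
noncomputable def rzMCR (E : V → V → Prop) (z : V) : ℝ :=
  ((inDeg E z : ℝ) + (outDeg E z : ℝ)) / (deg E z : ℝ)

lemma suppMAlpha (E : V → V → Prop) (α : ℝ) (z : V) :
    Function.support (mAlpha E α z) ⊆ insert z (outN E z) := by
  intro v hv
  by_contra hmem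
  simp only [Set.mem_insert_iff, outN, Set.mem_setOf_eq, not_or] at hmem
  apply hv
  simp [mAlpha, hmem.1, hmem.2]

lemma suppMAlphaFin {E : V → V → Prop} (hlf : LocFin E) (α : ℝ) (z : V) :
    (Function.support (mAlpha E α z)).Finite :=
  (((hlf z).subset Set.subset_union_right).insert z).subset (suppMAlpha E α z)

lemma degPos {E : V → V → Prop} (hlf : LocFin E) (hsc : StronglyConnected E) (z : V) :
    0 < deg E z := by
  obtain ⟨n, hn, f, hf0, hfn, hw⟩ := hsc z z
  have h1 : E z (f 1) := by rw [← hf0]; exact hw 0 hn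
  exact (Set.ncard_pos (hlf z)).2 ⟨f 1, Or.inr h1⟩

lemma inDegLe {E : V → V → Prop} (hlf : LocFin E) (z : V) : inDeg E z ≤ deg E z :=
  Set.ncard_le_ncard Set.subset_union_left (hlf z)

lemma degLe (E : V → V → Prop) (z : V) : deg E z ≤ inDeg E z + outDeg E z :=
  Set.ncard_union_le _ _

lemma totalMAlpha {E : V → V → Prop} (hlf : LocFin E) (hs : NoLoops E) (α : ℝ) (z : V) :
    ∑ᶠ v, mAlpha E α z v = α + (1 - α) * rzMCR E z := by
  classical
  have hfo : (outN E z).Finite := (hlf z).subset Set.subset_union_right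
  rw [finsum_eq_finset_sum_of_support_subset _
      (s := insert z hfo.toFinset) (by
        intro v hv
        have := suppMAlpha E α z hv
        simpa [hfo.mem_toFinset] using this)]
  rw [Finset.sum_insert (by simp only [Set.Finite.mem_toFinset, outN, Set.mem_setOf_eq]; exact hs z)]
  have h2 : ∀ v ∈ hfo.toFinset, mAlpha E α z v = (1 - α) / (deg E z : ℝ) := by
    intro v hv
    rw [hfo.mem_toFinset] at hv
    have hvz : v ≠ z := fun h => hs z (h ▸ hv)
    have hEv : E z v := hv
    simp [mAlpha, hvz, hEv]
  rw [Finset.sum_congr rfl h2, Finset.sum_const]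
  have hcard : hfo.toFinset.card = outDeg E z := by
    rw [outDeg, Set.ncard_eq_toFinset_card _ hfo]
  rw [hcard]
  have h1 : mAlpha E α z z = α + (1 - α) * (inDeg E z : ℝ) / (deg E z : ℝ) := by
    simp [mAlpha]
  rw [h1, nsmul_eq_mul, rzMCR]
  ring

lemma oneLeRz {E : V → V → Prop} (hlf : LocFin E) (hsc : StronglyConnected E) (z : V) :
    1 ≤ rzMCR E z := by
  have hd : (0 : ℝ) < (deg E z : ℝ) := by exact_mod_cast degPos hlf hsc z
  rw [rzMCR, le_div_iff₀ hd, one_mul]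
  exact_mod_cast degLe E z

lemma mAlphaMem {E : V → V → Prop} (hlf : LocFin E) (hsc : StronglyConnected E)
    {α : ℝ} (h0 : 0 ≤ α) (h1 : α ≤ 1) (z v : V) : mAlpha E α z v ∈ Set.Icc (0 : ℝ) 1 := by
  have hd : (0 : ℝ) < (deg E z : ℝ) := by exact_mod_cast degPos hlf hsc z
  have hd1 : (1 : ℝ) ≤ (deg E z : ℝ) := by exact_mod_cast degPos hlf hsc z
  have hin : (inDeg E z : ℝ) ≤ (deg E z : ℝ) := by exact_mod_cast inDegLe hlf z
  have hin0 : (0 : ℝ) ≤ (inDeg E z : ℝ) := Nat.cast_nonneg _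
  unfold mAlpha
  split_ifs with hvz hEv
  · constructor
    · have : 0 ≤ (1 - α) * (inDeg E z : ℝ) / (deg E z : ℝ) :=
        div_nonneg (mul_nonneg (by linarith) hin0) hd.le
      linarith
    · have h3 : (1 - α) * (inDeg E z : ℝ) ≤ (1 - α) * (deg E z : ℝ) := by nlinarith
      have h4 : (1 - α) * (inDeg E z : ℝ) / (deg E z : ℝ) ≤ 1 - α := by
        rw [div_le_iff₀ hd]; nlinarith
      linarith
  · constructor
    · exact div_nonneg (by linarith) hd.le
    · rw [div_le_one hd]; linarith
  · simp

lemma mAlphaAffine (E : V → V → Prop) {a b t s : ℝ} (hts : t + s = 1) (z v : V) :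
    mAlpha E (t * a + s * b) z v = t * mAlpha E a z v + s * mAlpha E b z v := by
  have hs' : s = 1 - t := by linarith
  subst hs'
  unfold mAlpha
  split_ifs <;> ring

lemma suppRight {A : V → V → ℝ}
    (h : (Function.support fun p : V × V => A p.1 p.2).Finite) (u : V) :
    (Function.support (A u)).Finite :=
  (h.image Prod.snd).subset fun v hv => ⟨(u, v), hv, rfl⟩

lemma doubleEq {g : V → V → ℝ} {s t : Finset V} (hs : ∀ u v, g u v ≠ 0 → u ∈ s)
    (ht : ∀ u v, g u v ≠ 0 → v ∈ t) :
    (∑ᶠ u, ∑ᶠ v, g u v) = ∑ u ∈ s, ∑ v ∈ t, g u v := by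
  rw [finsum_eq_finset_sum_of_support_subset _ (s := s) (by
    intro u hu
    rw [Function.mem_support] at hu
    by_contra hus
    exact hu (finsum_eq_zero_of_forall_eq_zero fun v =>
      not_not.1 fun hv => hus (hs u v hv)))]
  exact Finset.sum_congr rfl fun u _ =>
    finsum_eq_finset_sum_of_support_subset _ fun v hv => ht u v hv

lemma couplingTotal {E : V → V → Prop} {α : ℝ} {x y : V} {A : V → V → ℝ}
    (hA : IsCoupling E α x y A) :
    (∑ᶠ u, mAlpha E α x u) = ∑ᶠ v, mAlpha E α y v := by
  obtain ⟨hfin, hval, hrow, hcol⟩ := hA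
  classical
  set s : Finset V := (hfin.image Prod.fst).toFinset with hsdef
  set t : Finset V := (hfin.image Prod.snd).toFinset with htdef
  have hsmem : ∀ u v, A u v ≠ 0 → u ∈ s := fun u v h => by
    rw [hsdef, Set.Finite.mem_toFinset]; exact ⟨(u, v), h, rfl⟩
  have htmem : ∀ u v, A u v ≠ 0 → v ∈ t := fun u v h => by
    rw [htdef, Set.Finite.mem_toFinset]; exact ⟨(u, v), h, rfl⟩
  calc (∑ᶠ u, mAlpha E α x u) = ∑ᶠ u, ∑ᶠ v, A u v := finsum_congr fun u => (hrow u).symm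
    _ = ∑ u ∈ s, ∑ v ∈ t, A u v := doubleEq hsmem htmem
    _ = ∑ v ∈ t, ∑ u ∈ s, A u v := Finset.sum_comm
    _ = ∑ᶠ v, ∑ᶠ u, A u v :=
        (doubleEq (g := fun v u => A u v) (fun v u h => htmem u v h) (fun v u h => hsmem u v h)).symm
    _ = ∑ᶠ v, mAlpha E α y v := finsum_congr hcol

lemma existsCoupling {E : V → V → Prop} (hlf : LocFin E) (hs : NoLoops E)
    (hsc : StronglyConnected E) {x y : V} (hr : rzMCR E x = rzMCR E y)
    {α : ℝ} (hα : α ∈ Set.Ico (0 : ℝ) 1) : ∃ A, IsCoupling E α x y A := by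
  obtain ⟨hα0, hα1⟩ := hα
  set T : ℝ := α + (1 - α) * rzMCR E x with hTdef
  have hrz := oneLeRz hlf hsc x
  have hT1 : 1 ≤ T := by nlinarith
  have hT0 : (0 : ℝ) < T := by linarith
  have htx : ∑ᶠ u, mAlpha E α x u = T := totalMAlpha hlf hs α x
  have hty : ∑ᶠ v, mAlpha E α y v = T := by rw [totalMAlpha hlf hs α y, ← hr]
  have hbx : ∀ v, mAlpha E α x v ∈ Set.Icc (0 : ℝ) 1 := mAlphaMem hlf hsc hα0 hα1.le x
  have hby : ∀ v, mAlpha E α y v ∈ Set.Icc (0 : ℝ) 1 := mAlphaMem hlf hsc hα0 hα1.le y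
  refine ⟨fun u v => mAlpha E α x u * mAlpha E α y v / T, ?_, ?_, ?_, ?_⟩
  · apply ((suppMAlphaFin hlf α x).prod (suppMAlphaFin hlf α y)).subset
    rintro ⟨u, v⟩ hp
    rw [Function.mem_support] at hp
    exact ⟨fun h => hp (by simp [h]), fun h => hp (by simp [h])⟩
  · intro u v
    constructor
    · exact div_nonneg (mul_nonneg (hbx u).1 (hby v).1) hT0.le
    · rw [div_le_one hT0]
      calc mAlpha E α x u * mAlpha E α y v ≤ 1 := mul_le_one₀ (hbx u).2 (hby v).1 (hby v).2
        _ ≤ T := hT1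
  · intro u
    have heq : (fun v => mAlpha E α x u * mAlpha E α y v / T)
        = fun v => (mAlpha E α x u / T) * mAlpha E α y v := funext fun v => by ring
    rw [heq, ← mul_finsum _ _, hty]
    field_simp
  · intro v
    have heq : (fun u => mAlpha E α x u * mAlpha E α y v / T)
        = fun u => (mAlpha E α y v / T) * mAlpha E α x u := funext fun u => by ring
    rw [heq, ← mul_finsum _ _, htx]
    field_simp

end AuxMCR
section AuxMCR2

open Function Set

variable {V : Type*}

/-- The transport cost of a plan. -/
noncomputable def costMCR (E : V → V → Prop) (A : V → V → ℝ) : ℝ :=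
  ∑ᶠ u, ∑ᶠ v, A u v * (ddist E u v : ℝ)

lemma combCoupling {E : V → V → Prop} {x y : V} {a b t s : ℝ}
    (ht : 0 ≤ t) (hs' : 0 ≤ s) (hts : t + s = 1)
    {A B : V → V → ℝ} (hA : IsCoupling E a x y A) (hB : IsCoupling E b x y B) :
    IsCoupling E (t * a + s * b) x y (fun u v => t * A u v + s * B u v) ∧
    costMCR E (fun u v => t * A u v + s * B u v) = t * costMCR E A + s * costMCR E B := by
  classical
  obtain ⟨hAfin, hAval, hArow, hAcol⟩ := hA
  obtain ⟨hBfin, hBval, hBrow, hBcol⟩ := hB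
  set s₀ : Finset V := (hAfin.image Prod.fst).toFinset ∪ (hBfin.image Prod.fst).toFinset
  set t₀ : Finset V := (hAfin.image Prod.snd).toFinset ∪ (hBfin.image Prod.snd).toFinset
  have hAs : ∀ u v, A u v ≠ 0 → u ∈ s₀ := fun u v h =>
    Finset.mem_union_left _ (by rw [Set.Finite.mem_toFinset]; exact ⟨(u, v), h, rfl⟩)
  have hBs : ∀ u v, B u v ≠ 0 → u ∈ s₀ := fun u v h =>
    Finset.mem_union_right _ (by rw [Set.Finite.mem_toFinset]; exact ⟨(u, v), h, rfl⟩)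
  have hAt : ∀ u v, A u v ≠ 0 → v ∈ t₀ := fun u v h =>
    Finset.mem_union_left _ (by rw [Set.Finite.mem_toFinset]; exact ⟨(u, v), h, rfl⟩)
  have hBt : ∀ u v, B u v ≠ 0 → v ∈ t₀ := fun u v h =>
    Finset.mem_union_right _ (by rw [Set.Finite.mem_toFinset]; exact ⟨(u, v), h, rfl⟩)
  have hCs : ∀ u v, t * A u v + s * B u v ≠ 0 → u ∈ s₀ := by
    intro u v h
    by_cases hA0 : A u v = 0
    · exact hBs u v (fun hB0 => h (by rw [hA0, hB0]; ring))
    · exact hAs u v hA0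
  have hCt : ∀ u v, t * A u v + s * B u v ≠ 0 → v ∈ t₀ := by
    intro u v h
    by_cases hA0 : A u v = 0
    · exact hBt u v (fun hB0 => h (by rw [hA0, hB0]; ring))
    · exact hAt u v hA0
  constructor
  · refine ⟨?_, ?_, ?_, ?_⟩
    · apply (hAfin.union hBfin).subset
      rintro ⟨u, v⟩ hp
      rw [Function.mem_support] at hp
      by_cases hA0 : A u v = 0
      · exact Or.inr fun hB0 => hp (by simp only at hB0 ⊢; rw [hA0, hB0]; ring)
      · exact Or.inl hA0
    · intro u v
      have h1 := hAval u v
      have h2 := hBval u v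
      simp only [Set.mem_Icc] at h1 h2 ⊢
      constructor
      · have := mul_nonneg ht h1.1; have := mul_nonneg hs' h2.1; linarith
      · nlinarith [h1.1, h1.2, h2.1, h2.2]
    · intro u
      have hfa : (Function.support fun v => t * A u v).Finite :=
        (suppRight hAfin u).subset fun v hv h0 => hv (by simp [h0])
      have hfb : (Function.support fun v => s * B u v).Finite :=
        (suppRight hBfin u).subset fun v hv h0 => hv (by simp [h0])
      rw [finsum_add_distrib hfa hfb, ← mul_finsum _ _,
        ← mul_finsum _ _, hArow u, hBrow u,
        ← mAlphaAffine E hts x u]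
    · intro v
      have hfinA' : (Function.support fun p : V × V => A p.2 p.1).Finite := by
        have := hAfin.image (Prod.swap)
        apply this.subset
        rintro ⟨u, w⟩ hp
        exact ⟨(w, u), hp, rfl⟩
      have hfinB' : (Function.support fun p : V × V => B p.2 p.1).Finite := by
        have := hBfin.image (Prod.swap)
        apply this.subset
        rintro ⟨u, w⟩ hp
        exact ⟨(w, u), hp, rfl⟩
      have hfA2 : (Function.support fun u => A u v).Finite :=
        suppRight (A := fun c d => A d c) hfinA' v
      have hfB2 : (Function.support fun u => B u v).Finite :=
        suppRight (A := fun c d => B d c) hfinB' v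
      have hfa : (Function.support fun u => t * A u v).Finite :=
        hfA2.subset fun u hu h0 => hu (by simp [h0])
      have hfb : (Function.support fun u => s * B u v).Finite :=
        hfB2.subset fun u hu h0 => hu (by simp [h0])
      rw [finsum_add_distrib hfa hfb, ← mul_finsum _ _,
        ← mul_finsum _ _, hAcol v, hBcol v,
        ← mAlphaAffine E hts y v]
  · have e1 : costMCR E A = ∑ u ∈ s₀, ∑ v ∈ t₀, A u v * (ddist E u v : ℝ) :=
      doubleEq (fun u v h => hAs u v (fun h0 => h (by rw [h0]; ring)))
        (fun u v h => hAt u v (fun h0 => h (by rw [h0]; ring)))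
    have e2 : costMCR E B = ∑ u ∈ s₀, ∑ v ∈ t₀, B u v * (ddist E u v : ℝ) :=
      doubleEq (fun u v h => hBs u v (fun h0 => h (by rw [h0]; ring)))
        (fun u v h => hBt u v (fun h0 => h (by rw [h0]; ring)))
    have e3 : costMCR E (fun u v => t * A u v + s * B u v)
        = ∑ u ∈ s₀, ∑ v ∈ t₀, (t * A u v + s * B u v) * (ddist E u v : ℝ) :=
      doubleEq (fun u v h => hCs u v (fun h0 => h (by
          show (t * A u v + s * B u v) * (ddist E u v : ℝ) = 0
          rw [h0]; ring)))
        (fun u v h => hCt u v (fun h0 => h (by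
          show (t * A u v + s * B u v) * (ddist E u v : ℝ) = 0
          rw [h0]; ring)))
    rw [e1, e2, e3, Finset.mul_sum, Finset.mul_sum, ← Finset.sum_add_distrib]
    refine Finset.sum_congr rfl fun u _ => ?_
    rw [Finset.mul_sum, Finset.mul_sum, ← Finset.sum_add_distrib]
    exact Finset.sum_congr rfl fun v _ => by ring

lemma costNonneg {E : V → V → Prop} {α : ℝ} {x y : V} {A : V → V → ℝ}
    (hA : IsCoupling E α x y A) : 0 ≤ costMCR E A :=
  finsum_nonneg fun u => finsum_nonneg fun v =>
    mul_nonneg (hA.2.1 u v).1 (Nat.cast_nonneg _)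

lemma wassSet (E : V → V → Prop) (α : ℝ) (x y : V) :
    Wass E α x y = sInf {w : ℝ | ∃ A : V → V → ℝ, IsCoupling E α x y A ∧ w = costMCR E A} :=
  rfl

end AuxMCR2


theorem stmt_0 (E : V → V → Prop) (hlf : LocFin E) (hs : NoLoops E) (hsc : StronglyConnected E) (x y : V) :
    ConcaveOn ℝ (Set.Ico (0 : ℝ) 1) (fun α => ricciAlpha E α x y) := by
  classical
  by_cases hrz : rzMCR E x = rzMCR E y
  · have hW : ConvexOn ℝ (Set.Ico (0 : ℝ) 1) (fun α => Wass E α x y) := by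
      refine ⟨convex_Ico 0 1, ?_⟩
      intro a ha b hb t s ht hs' hts
      simp only [smul_eq_mul]
      rcases eq_or_lt_of_le ht with h0 | htpos
      · have hs1 : s = 1 := by linarith
        rw [← h0, hs1]; simp
      rcases eq_or_lt_of_le hs' with h0 | hspos
      · have ht1 : t = 1 := by linarith
        rw [← h0, ht1]; simp
      have hbdd : ∀ β : ℝ, BddBelow {w : ℝ | ∃ A, IsCoupling E β x y A ∧ w = costMCR E A} := by
        intro β
        refine ⟨0, ?_⟩
        rintro w ⟨A, hA, rfl⟩
        exact costNonneg hA
      have hSne : ∀ {β : ℝ}, β ∈ Set.Ico (0 : ℝ) 1 →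
          {w : ℝ | ∃ A, IsCoupling E β x y A ∧ w = costMCR E A}.Nonempty := by
        intro β hβ
        obtain ⟨A, hA⟩ := existsCoupling hlf hs hsc hrz hβ
        exact ⟨costMCR E A, A, hA, rfl⟩
      have key : ∀ wa ∈ {w : ℝ | ∃ A, IsCoupling E a x y A ∧ w = costMCR E A},
          ∀ wb ∈ {w : ℝ | ∃ A, IsCoupling E b x y A ∧ w = costMCR E A},
          Wass E (t * a + s * b) x y ≤ t * wa + s * wb := by
        rintro wa ⟨A, hA, rfl⟩ wb ⟨B, hB, rfl⟩
        obtain ⟨hC, hcost⟩ := combCoupling ht hs' hts hA hB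
        rw [wassSet]
        exact csInf_le (hbdd _) ⟨_, hC, hcost.symm⟩
      have step1 : ∀ wb ∈ {w : ℝ | ∃ A, IsCoupling E b x y A ∧ w = costMCR E A},
          Wass E (t * a + s * b) x y ≤ t * Wass E a x y + s * wb := by
        intro wb hwb
        have h2 : (Wass E (t * a + s * b) x y - s * wb) / t ≤ Wass E a x y := by
          rw [wassSet E a]
          refine le_csInf (hSne ha) fun wa hwa => ?_
          rw [div_le_iff₀ htpos]
          have := key wa hwa wb hwb
          linarith
        rw [div_le_iff₀ htpos] at h2
        linarith
      have h3 : (Wass E (t * a + s * b) x y - t * Wass E a x y) / s ≤ Wass E b x y := by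
        rw [wassSet E b]
        refine le_csInf (hSne hb) fun wb hwb => ?_
        rw [div_le_iff₀ hspos]
        have := step1 wb hwb
        linarith
      rw [div_le_iff₀ hspos] at h3
      linarith
    rcases Nat.eq_zero_or_pos (ddist E x y) with hd0 | hdpos
    · have heq : (fun α => ricciAlpha E α x y) = fun _ => (1 : ℝ) := by
        funext α; simp [ricciAlpha, hd0]
      rw [heq]; exact concaveOn_const _ (convex_Ico 0 1)
    · have hdR : (0 : ℝ) < (ddist E x y : ℝ) := by exact_mod_cast hdpos
      have heq : (fun α => ricciAlpha E α x y)
          = fun α => -((1 / (ddist E x y : ℝ)) • (fun β => Wass E β x y) α) + 1 := by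
        funext α
        simp only [smul_eq_mul, ricciAlpha]
        ring
      rw [heq]
      exact ((hW.smul (by positivity)).neg).add_const 1
  · refine ⟨convex_Ico 0 1, ?_⟩
    intro a ha b hb t s ht hs' hts
    have hγ : t • a + s • b ∈ Set.Ico (0 : ℝ) 1 := (convex_Ico (0 : ℝ) 1) ha hb ht hs' hts
    have hW0 : ∀ α ∈ Set.Ico (0 : ℝ) 1, Wass E α x y = 0 := by
      intro α hα
      have hset : {w : ℝ | ∃ A, IsCoupling E α x y A ∧ w = costMCR E A} = ∅ := by
        ext w
        simp only [Set.mem_setOf_eq, Set.mem_empty_iff_false, iff_false, not_exists]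
        intro A hA'
        obtain ⟨hA, -⟩ := hA'
        apply hrz
        have h1 := couplingTotal hA
        rw [totalMAlpha hlf hs α x, totalMAlpha hlf hs α y] at h1
        have hne : (1 : ℝ) - α ≠ 0 := by
          have := hα.2; intro h; linarith
        exact mul_left_cancel₀ hne (by linarith)
      rw [wassSet, hset, Real.sInf_empty]
    simp only [smul_eq_mul] at hγ ⊢
    rw [ricciAlpha, ricciAlpha, ricciAlpha, hW0 a ha, hW0 b hb, hW0 _ hγ]
    simp only [zero_div, sub_zero, mul_one]
    linarith
end

section
/- Let G = (V,E) be a directed graph that is locally finite, simple, and strongly connected, and let κ_0 ∈ ℝ. If κ(u, v) ≥ κ_0 for every edge (u, v) ∈ E, then κ(x, y) ≥ κ_0 for every pair of vertices (x, y) such that there exists a directed path from x to y. -/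
open Filter Set Topology

variable {V : Type*}

section
variable {E : V → V → Prop} {x y z u v : V}

def wset (E : V → V → Prop) (x y : V) : Set ℕ :=
  {n : ℕ | ∃ f : ℕ → V, f 0 = x ∧ f n = y ∧ IsDiWalk E n f}

lemma ddist_eq : ddist E x y = sInf (wset E x y) := rfl

lemma wset_nonempty (hsc : StronglyConnected E) (x y : V) : (wset E x y).Nonempty := by
  obtain ⟨n, -, f, h⟩ := hsc x y
  exact ⟨n, f, h⟩

lemma self_mem_wset : 0 ∈ wset E x x := ⟨fun _ => x, rfl, rfl, fun i hi => by omega⟩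

lemma ddist_le (h : n ∈ wset E x y) : ddist E x y ≤ n := Nat.sInf_le h

lemma ddist_self : ddist E x x = 0 :=
  Nat.le_zero.1 (ddist_le self_mem_wset)

lemma exists_walk_ddist (hsc : StronglyConnected E) (x y : V) :
    ∃ f : ℕ → V, f 0 = x ∧ f (ddist E x y) = y ∧ IsDiWalk E (ddist E x y) f :=
  Nat.sInf_mem (wset_nonempty hsc x y)

lemma eq_of_zero_mem (h : 0 ∈ wset E x y) : x = y := by
  obtain ⟨f, h0, h1, -⟩ := h; rw [← h0, h1]

lemma wset_concat {m n : ℕ} (hm : m ∈ wset E x y) (hn : n ∈ wset E y z) :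
    m + n ∈ wset E x z := by
  obtain ⟨f, hf0, hfm, hf⟩ := hm
  obtain ⟨g, hg0, hgn, hg⟩ := hn
  refine ⟨fun i => if i < m then f i else g (i - m), ?_, ?_, ?_⟩
  · rcases Nat.eq_zero_or_pos m with h | h
    · simp only [h, Nat.lt_irrefl, if_false]
      subst h; rw [Nat.sub_zero, hg0, ← hfm, hf0]
    · simp [h, hf0]
  · simp only [show ¬ (m + n < m) by omega, if_false]
    rw [show m + n - m = n by omega, hgn]
  · intro i hi
    rcases lt_trichotomy (i+1) m with h | h | h
    · simp only [show i < m by omega, h, if_true]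
      exact hf i (by omega)
    · have h1 : (if i < m then f i else g (i-m)) = f i := if_pos (by omega)
      have h2 : (if i+1 < m then f (i+1) else g (i+1-m)) = f (i+1) := by
        rw [if_neg (by omega), show i+1-m = 0 by omega, hg0, ← hfm, h]
      show E (if i < m then f i else g (i-m)) (if i+1 < m then f (i+1) else g (i+1-m))
      rw [h1, h2]; exact hf i (by omega)
    · simp only [show ¬ (i < m) by omega, show ¬ (i + 1 < m) by omega, if_false,
        show i + 1 - m = (i - m) + 1 by omega]
      exact hg (i - m) (by omega)

lemma ddist_triangle (hsc : StronglyConnected E) (x y z : V) :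
    ddist E x z ≤ ddist E x y + ddist E y z :=
  ddist_le (wset_concat (Nat.sInf_mem (wset_nonempty hsc x y))
    (Nat.sInf_mem (wset_nonempty hsc y z)))

lemma edge_mem_wset (hE : E x y) : 1 ∈ wset E x y := by
  refine ⟨fun i => if i = 0 then x else y, by simp, by simp, fun i hi => ?_⟩
  interval_cases i; simpa using hE

lemma ddist_edge (hs : NoLoops E) (hE : E x y) : ddist E x y = 1 := by
  have h1 : ddist E x y ≤ 1 := ddist_le (edge_mem_wset hE)
  have hne : x ≠ y := by rintro rfl; exact hs x hE
  have h0 : ddist E x y ≠ 0 := by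
    intro h
    have := Nat.sInf_mem (⟨1, edge_mem_wset hE⟩ : (wset E x y).Nonempty)
    rw [ddist_eq] at h; rw [h] at this
    exact hne (eq_of_zero_mem this)
  omega

lemma ddist_ne_zero (hsc : StronglyConnected E) (hne : x ≠ y) : ddist E x y ≠ 0 := by
  intro h
  have := Nat.sInf_mem (wset_nonempty hsc x y)
  rw [ddist_eq] at h; rw [h] at this
  exact hne (eq_of_zero_mem this)

noncomputable def ratio (E : V → V → Prop) (x : V) : ℝ :=
  ((inDeg E x : ℝ) + (outDeg E x : ℝ)) / (deg E x : ℝ)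

lemma not_mem_outN (hs : NoLoops E) : x ∉ outN E x := hs x

lemma outN_finite (hlf : LocFin E) (x : V) : (outN E x).Finite :=
  (hlf x).subset subset_union_right

lemma deg_pos (hlf : LocFin E) (hsc : StronglyConnected E) (x : V) : 0 < deg E x := by
  obtain ⟨n, hn, f, hf0, -, hw⟩ := hsc x x
  have : f 1 ∈ nbhd E x := Or.inr (by rw [← hf0]; exact hw 0 (by omega))
  exact (Set.ncard_pos (hlf x)).mpr ⟨f 1, this⟩

lemma inDeg_le_deg (hlf : LocFin E) : inDeg E x ≤ deg E x :=
  Set.ncard_le_ncard subset_union_left (hlf x)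

lemma outDeg_le_deg (hlf : LocFin E) : outDeg E x ≤ deg E x :=
  Set.ncard_le_ncard subset_union_right (hlf x)

lemma deg_le_sum (hlf : LocFin E) : deg E x ≤ inDeg E x + outDeg E x :=
  Set.ncard_union_le _ _

lemma ratio_ge_one (hlf : LocFin E) (hsc : StronglyConnected E) (x : V) : 1 ≤ ratio E x := by
  have h1 := deg_pos hlf hsc x
  have h2 := deg_le_sum (x := x) hlf
  have h2' : (deg E x : ℝ) ≤ (inDeg E x : ℝ) + (outDeg E x : ℝ) := by exact_mod_cast h2
  rw [ratio, le_div_iff₀ (by exact_mod_cast h1)]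
  linarith

lemma mAlpha_nonneg (hlf : LocFin E) (hsc : StronglyConnected E) {α : ℝ}
    (hα : α ∈ Set.Icc (0:ℝ) 1) (x v : V) : 0 ≤ mAlpha E α x v := by
  have h1 : (0:ℝ) ≤ 1 - α := by linarith [hα.2]
  unfold mAlpha
  split_ifs
  · exact add_nonneg hα.1 (div_nonneg (mul_nonneg h1 (by positivity)) (by positivity))
  · positivity
  · exact le_refl _

lemma mAlpha_le_one (hlf : LocFin E) (hsc : StronglyConnected E) {α : ℝ}
    (hα : α ∈ Set.Icc (0:ℝ) 1) (x v : V) : mAlpha E α x v ≤ 1 := by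
  have h1 : (0:ℝ) ≤ 1 - α := by linarith [hα.2]
  have hdeg : (0:ℝ) < deg E x := by exact_mod_cast deg_pos hlf hsc x
  have hin : (inDeg E x : ℝ) ≤ deg E x := by exact_mod_cast inDeg_le_deg hlf
  unfold mAlpha
  split_ifs
  · have key : (1-α) * (inDeg E x : ℝ) / deg E x ≤ 1 - α := by
      rw [div_le_iff₀ hdeg]; nlinarith
    linarith
  · have hone : (1:ℝ) ≤ deg E x := by exact_mod_cast deg_pos hlf hsc x
    rw [div_le_one hdeg]; linarith [hα.1]
  · linarith [hα.2]

open Classical in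
noncomputable def suppFin (hlf : LocFin E) (x : V) : Finset V :=
  insert x (outN_finite hlf x).toFinset

lemma support_subset_suppFin (hlf : LocFin E) {α : ℝ} (x : V) :
    Function.support (mAlpha E α x) ⊆ ↑(suppFin hlf x) := by
  intro v hv
  classical
  simp only [suppFin, Finset.coe_insert, Set.mem_insert_iff, Set.Finite.coe_toFinset]
  by_contra hc
  push_neg at hc
  apply hv
  have h2 : ¬ E x v := hc.2
  unfold mAlpha
  rw [if_neg hc.1, if_neg h2]

lemma finsum_mAlpha (hlf : LocFin E) (hs : NoLoops E) (hsc : StronglyConnected E) (α : ℝ) (x : V) :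
    ∑ᶠ v, mAlpha E α x v = α + (1-α) * ratio E x := by
  classical
  rw [finsum_eq_sum_of_support_subset _ (support_subset_suppFin hlf x)]
  rw [suppFin, Finset.sum_insert (by simp [Set.Finite.mem_toFinset]; exact hs x)]
  have hval : ∀ v ∈ (outN_finite hlf x).toFinset, mAlpha E α x v = (1-α) / (deg E x : ℝ) := by
    intro v hv
    have h1 : E x v := by simpa [Set.Finite.mem_toFinset, outN] using hv
    have h2 : v ≠ x := by rintro rfl; exact hs _ h1
    unfold mAlpha
    rw [if_neg h2, if_pos h1]
  have hcard : (outN_finite hlf x).toFinset.card = outDeg E x :=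
    (Set.ncard_eq_toFinset_card _ _).symm
  have hdeg : (deg E x : ℝ) ≠ 0 := by
    have := deg_pos hlf hsc x; positivity
  rw [Finset.sum_congr rfl hval, Finset.sum_const, nsmul_eq_mul, hcard]
  show (if x = x then α + (1 - α) * (inDeg E x : ℝ) / (deg E x : ℝ)
    else if E x x then (1 - α) / (deg E x : ℝ) else 0) + _ = _
  rw [if_pos rfl, ratio]
  field_simp
  ring

lemma mAlpha_support_finite (hlf : LocFin E) {α : ℝ} (x : V) :
    (Function.support (mAlpha E α x)).Finite :=
  Set.Finite.subset (suppFin hlf x).finite_toSet (support_subset_suppFin hlf x)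

lemma coupling_finset {A : V → V → ℝ}
    (hA : (Function.support fun p : V × V => A p.1 p.2).Finite) :
    ∃ T : Finset V, ∀ u v, A u v ≠ 0 → u ∈ T ∧ v ∈ T := by
  classical
  refine ⟨hA.toFinset.image Prod.fst ∪ hA.toFinset.image Prod.snd, fun u v h => ?_⟩
  have : (u, v) ∈ hA.toFinset := by simpa [Set.Finite.mem_toFinset] using h
  constructor
  · exact Finset.mem_union_left _ (Finset.mem_image.2 ⟨(u,v), this, rfl⟩)
  · exact Finset.mem_union_right _ (Finset.mem_image.2 ⟨(u,v), this, rfl⟩)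

lemma finsum2_eq_sum {f : V → V → ℝ} {T : Finset V}
    (h : ∀ u v, f u v ≠ 0 → u ∈ T ∧ v ∈ T) :
    ∑ᶠ u, ∑ᶠ v, f u v = ∑ u ∈ T, ∑ v ∈ T, f u v := by
  have inner : ∀ u, (∑ᶠ v, f u v) = ∑ v ∈ T, f u v := fun u =>
    finsum_eq_sum_of_support_subset _ (fun v hv => (h u v hv).2)
  rw [finsum_congr inner]
  refine finsum_eq_sum_of_support_subset _ (fun u hu => ?_)
  by_contra hT
  exact hu (Finset.sum_eq_zero fun v _ => by_contra fun hf => hT (h u v hf).1)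

lemma coupling_mass_eq {A : V → V → ℝ} {α : ℝ} {x y : V} (hA : IsCoupling E α x y A) :
    ∑ᶠ u, mAlpha E α x u = ∑ᶠ v, mAlpha E α y v := by
  obtain ⟨T, hT⟩ := coupling_finset hA.1
  have h1 : ∑ᶠ u, mAlpha E α x u = ∑ᶠ u, ∑ᶠ v, A u v :=
    finsum_congr fun u => (hA.2.2.1 u).symm
  have h2 : ∑ᶠ v, mAlpha E α y v = ∑ᶠ v, ∑ᶠ u, A u v :=
    finsum_congr fun v => (hA.2.2.2 v).symm
  rw [h1, h2, finsum2_eq_sum hT, finsum2_eq_sum (fun v u h => ⟨(hT u v h).2, (hT u v h).1⟩)]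
  exact Finset.sum_comm

lemma ratio_eq_of_coupling (hlf : LocFin E) (hs : NoLoops E) (hsc : StronglyConnected E)
    {A : V → V → ℝ} {α : ℝ} {x y : V} (hα : α ≠ 1) (hA : IsCoupling E α x y A) :
    ratio E x = ratio E y := by
  have := coupling_mass_eq hA
  rw [finsum_mAlpha hlf hs hsc, finsum_mAlpha hlf hs hsc] at this
  have h1 : (1 : ℝ) - α ≠ 0 := fun hc => hα (by linarith)
  exact mul_left_cancel₀ h1 (by linarith)

lemma coupling_exists (hlf : LocFin E) (hs : NoLoops E) (hsc : StronglyConnected E)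
    {α : ℝ} (hα : α ∈ Set.Ioo (0:ℝ) 1) {x y : V} (hr : ratio E x = ratio E y) :
    ∃ A, IsCoupling E α x y A := by
  have hIcc : α ∈ Set.Icc (0:ℝ) 1 := ⟨hα.1.le, hα.2.le⟩
  set M : ℝ := α + (1-α) * ratio E y with hM
  have hM1 : 1 ≤ M := by
    have := ratio_ge_one hlf hsc y
    nlinarith [hα.1, hα.2]
  have hM0 : M ≠ 0 := by linarith
  refine ⟨fun u v => mAlpha E α x u * mAlpha E α y v / M, ?_, ?_, ?_, ?_⟩
  · refine Set.Finite.subset (((suppFin hlf x) ×ˢ (suppFin hlf y)).finite_toSet) ?_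
    rintro ⟨u, v⟩ hp
    have h1 : mAlpha E α x u ≠ 0 ∧ mAlpha E α y v ≠ 0 := by
      constructor <;> intro hc <;> simp [hc] at hp
    simp only [Finset.coe_product, Set.mem_prod]
    exact ⟨support_subset_suppFin hlf x h1.1, support_subset_suppFin hlf y h1.2⟩
  · intro u v
    constructor
    · have := mAlpha_nonneg hlf hsc hIcc x u
      have := mAlpha_nonneg hlf hsc hIcc y v
      positivity
    · rw [div_le_one (by linarith)]
      calc mAlpha E α x u * mAlpha E α y v ≤ 1 * 1 := by
            apply mul_le_mul (mAlpha_le_one hlf hsc hIcc x u) (mAlpha_le_one hlf hsc hIcc y v)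
              (mAlpha_nonneg hlf hsc hIcc y v) zero_le_one
        _ ≤ M := by linarith
  · intro u
    have hfin : (Function.support fun v => mAlpha E α y v).Finite := mAlpha_support_finite hlf y
    calc (∑ᶠ v, mAlpha E α x u * mAlpha E α y v / M)
        = ∑ᶠ v, (mAlpha E α x u / M) * mAlpha E α y v := by
          apply finsum_congr; intro v; ring
      _ = (mAlpha E α x u / M) * ∑ᶠ v, mAlpha E α y v := (mul_finsum' _ _ hfin).symm
      _ = mAlpha E α x u := by
          rw [finsum_mAlpha hlf hs hsc, ← hM]; field_simp
  · intro v
    have hfin : (Function.support fun u => mAlpha E α x u).Finite := mAlpha_support_finite hlf x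
    calc (∑ᶠ u, mAlpha E α x u * mAlpha E α y v / M)
        = ∑ᶠ u, (mAlpha E α y v / M) * mAlpha E α x u := by
          apply finsum_congr; intro u; ring
      _ = (mAlpha E α y v / M) * ∑ᶠ u, mAlpha E α x u := (mul_finsum' _ _ hfin).symm
      _ = mAlpha E α y v := by
          rw [finsum_mAlpha hlf hs hsc, hr, ← hM]; field_simp

def WSet (E : V → V → Prop) (α : ℝ) (x y : V) : Set ℝ :=
  {w : ℝ | ∃ A : V → V → ℝ, IsCoupling E α x y A ∧
    w = ∑ᶠ u, ∑ᶠ v, A u v * (ddist E u v : ℝ)}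

lemma Wass_eq_sInf : Wass E α x y = sInf (WSet E α x y) := rfl

lemma WSet_nonneg {w : ℝ} (hw : w ∈ WSet E α x y) : 0 ≤ w := by
  obtain ⟨A, hA, rfl⟩ := hw
  refine finsum_nonneg fun u => finsum_nonneg fun v => ?_
  exact mul_nonneg ((hA.2.1 u v).1) (by positivity)

lemma WSet_bddBelow : BddBelow (WSet E α x y) := ⟨0, fun w hw => WSet_nonneg hw⟩

lemma Wass_nonneg : 0 ≤ Wass E α x y :=
  Real.sInf_nonneg fun _ h => WSet_nonneg h

lemma Wass_le {A : V → V → ℝ} (hA : IsCoupling E α x y A) :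
    Wass E α x y ≤ ∑ᶠ u, ∑ᶠ v, A u v * (ddist E u v : ℝ) :=
  csInf_le WSet_bddBelow ⟨A, hA, rfl⟩

lemma Wass_self_nonpos (hlf : LocFin E) (hsc : StronglyConnected E) {α : ℝ}
    (hα : α ∈ Set.Icc (0:ℝ) 1) (x : V) : Wass E α x x ≤ 0 := by
  classical
  have hA : IsCoupling E α x x (fun u v => if u = v then mAlpha E α x u else 0) := by
    refine ⟨?_, ?_, ?_, ?_⟩
    · refine Set.Finite.subset ((mAlpha_support_finite (α := α) hlf x).image (fun v => (v, v))) ?_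
      rintro ⟨u, v⟩ hp
      simp only [Function.mem_support] at hp
      have huv : u = v := by by_contra hc; simp [hc] at hp
      subst huv
      refine ⟨u, ?_, rfl⟩
      simp only [if_pos rfl] at hp
      exact hp
    · intro u v
      show (if u = v then mAlpha E α x u else 0) ∈ Set.Icc (0:ℝ) 1
      split_ifs
      · exact ⟨mAlpha_nonneg hlf hsc hα x u, mAlpha_le_one hlf hsc hα x u⟩
      · exact ⟨le_refl _, zero_le_one⟩
    · intro u
      rw [finsum_eq_single _ u (fun v hv => if_neg (fun hc => hv (hc.symm)))]
      exact if_pos rfl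
    · intro v
      rw [finsum_eq_single _ v (fun u hu => if_neg hu)]
      exact if_pos rfl
  have := Wass_le hA
  refine le_trans this (le_of_eq ?_)
  refine finsum_eq_zero_of_forall_eq_zero fun u => ?_
  refine finsum_eq_zero_of_forall_eq_zero fun v => ?_
  rcases eq_or_ne u v with rfl | hne
  · simp [ddist_self]
  · simp [if_neg hne]

lemma gluing (hlf : LocFin E) (hs : NoLoops E) (hsc : StronglyConnected E)
    {α : ℝ} (hIcc : α ∈ Set.Icc (0:ℝ) 1) {x y z : V} {A B : V → V → ℝ}
    (hA : IsCoupling E α x y A) (hB : IsCoupling E α y z B) :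
    ∃ C, IsCoupling E α x z C ∧
      (∑ᶠ u, ∑ᶠ w, C u w * (ddist E u w : ℝ)) ≤
        (∑ᶠ u, ∑ᶠ v, A u v * (ddist E u v : ℝ)) +
        (∑ᶠ u, ∑ᶠ v, B u v * (ddist E u v : ℝ)) := by
  classical
  obtain ⟨TA, hTA⟩ := coupling_finset hA.1
  obtain ⟨TB, hTB⟩ := coupling_finset hB.1
  set T : Finset V := TA ∪ TB with hT
  have hA' : ∀ u v, A u v ≠ 0 → u ∈ T ∧ v ∈ T := fun u v h =>
    ⟨Finset.mem_union_left _ (hTA u v h).1, Finset.mem_union_left _ (hTA u v h).2⟩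
  have hB' : ∀ u v, B u v ≠ 0 → u ∈ T ∧ v ∈ T := fun u v h =>
    ⟨Finset.mem_union_right _ (hTB u v h).1, Finset.mem_union_right _ (hTB u v h).2⟩
  have hA0 : ∀ u v, 0 ≤ A u v := fun u v => (hA.2.1 u v).1
  have hB0 : ∀ u v, 0 ≤ B u v := fun u v => (hB.2.1 u v).1
  set m : V → ℝ := mAlpha E α y with hm
  have rowA : ∀ u, ∑ v ∈ T, A u v = mAlpha E α x u := fun u => by
    rw [← hA.2.2.1 u]
    exact (finsum_eq_sum_of_support_subset _ (fun v hv => (hA' u v hv).2)).symm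
  have colA : ∀ v, ∑ u ∈ T, A u v = m v := fun v => by
    rw [hm, ← hA.2.2.2 v]
    exact (finsum_eq_sum_of_support_subset _ (fun u hu => (hA' u v hu).1)).symm
  have rowB : ∀ v, ∑ w ∈ T, B v w = m v := fun v => by
    rw [hm, ← hB.2.2.1 v]
    exact (finsum_eq_sum_of_support_subset _ (fun w hw => (hB' v w hw).2)).symm
  have colB : ∀ w, ∑ v ∈ T, B v w = mAlpha E α z w := fun w => by
    rw [← hB.2.2.2 w]
    exact (finsum_eq_sum_of_support_subset _ (fun v hv => (hB' v w hv).1)).symm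
  have hm0A : ∀ v, m v = 0 → ∀ u, A u v = 0 := by
    intro v hv u
    rcases eq_or_ne (A u v) 0 with h | h
    · exact h
    · exfalso
      have h1 : A u v ≤ ∑ u' ∈ T, A u' v :=
        Finset.single_le_sum (fun i _ => hA0 i v) (hA' u v h).1
      rw [colA, hv] at h1
      exact h (le_antisymm h1 (hA0 u v))
  have hm0B : ∀ v, m v = 0 → ∀ w, B v w = 0 := by
    intro v hv w
    rcases eq_or_ne (B v w) 0 with h | h
    · exact h
    · exfalso
      have h1 : B v w ≤ ∑ w' ∈ T, B v w' :=
        Finset.single_le_sum (fun i _ => hB0 v i) (hB' v w h).2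
      rw [rowB, hv] at h1
      exact h (le_antisymm h1 (hB0 v w))
  have hBle : ∀ v w, B v w ≤ m v := by
    intro v w
    rcases eq_or_ne (B v w) 0 with h | h
    · rw [h, hm]; exact mAlpha_nonneg hlf hsc hIcc y v
    · calc B v w ≤ ∑ w' ∈ T, B v w' :=
            Finset.single_le_sum (fun i _ => hB0 v i) (hB' v w h).2
        _ = m v := rowB v
  have hmnn : ∀ v, 0 ≤ m v := fun v => mAlpha_nonneg hlf hsc hIcc y v
  set C : V → V → ℝ := fun u w => ∑ v ∈ T, A u v * B v w / m v with hC
  have hCnn : ∀ u w, 0 ≤ C u w := fun u w =>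
    Finset.sum_nonneg fun v _ => by
      have := hA0 u v; have := hB0 v w; have := hmnn v; positivity
  have hCT : ∀ u w, C u w ≠ 0 → u ∈ T ∧ w ∈ T := by
    intro u w h
    obtain ⟨v, -, hv⟩ := Finset.exists_ne_zero_of_sum_ne_zero h
    have hAuv : A u v ≠ 0 := fun hc => hv (by rw [hc]; ring)
    have hBvw : B v w ≠ 0 := fun hc => hv (by rw [hc]; ring)
    exact ⟨(hA' u v hAuv).1, (hB' v w hBvw).2⟩
  have hCle : ∀ u w, C u w ≤ mAlpha E α x u := by
    intro u w
    have step : ∀ v ∈ T, A u v * B v w / m v ≤ A u v := by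
      intro v _hv
      rcases eq_or_ne (m v) 0 with h | h
      · rw [hm0B v h w]; simp [hA0 u v]
      · rw [div_le_iff₀ (lt_of_le_of_ne (hmnn v) (Ne.symm h))]
        have := hBle v w
        nlinarith [hA0 u v, hB0 v w, hmnn v]
    calc C u w ≤ ∑ v ∈ T, A u v := Finset.sum_le_sum step
      _ = mAlpha E α x u := rowA u
  have key : ∀ v (c : ℝ), c / m v * m v = c ∨ (c / m v * m v = 0 ∧ m v = 0) := by
    intro v c
    rcases eq_or_ne (m v) 0 with h | h
    · right; rw [h]; simp
    · left; field_simp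
  have hCcoup : IsCoupling E α x z C := by
    refine ⟨?_, ?_, ?_, ?_⟩
    · refine Set.Finite.subset (T ×ˢ T).finite_toSet ?_
      rintro ⟨u, w⟩ hp
      have := hCT u w hp
      simp only [Finset.coe_product, Set.mem_prod]
      exact this
    · exact fun u w => ⟨hCnn u w, le_trans (hCle u w) (mAlpha_le_one hlf hsc hIcc x u)⟩
    · intro u
      have hsupp : ∀ w, C u w ≠ 0 → w ∈ T := fun w h => (hCT u w h).2
      rw [finsum_eq_sum_of_support_subset _ hsupp]
      rw [Finset.sum_comm]
      rw [← rowA u]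
      refine Finset.sum_congr rfl fun v _ => ?_
      have : ∀ w ∈ T, A u v * B v w / m v = (A u v / m v) * B v w := fun w _ => by ring
      rw [Finset.sum_congr rfl this, ← Finset.mul_sum, rowB]
      rcases eq_or_ne (m v) 0 with h | h
      · rw [hm0A v h u, h]; ring
      · field_simp
    · intro w
      have hsupp : ∀ u, C u w ≠ 0 → u ∈ T := fun u h => (hCT u w h).1
      rw [finsum_eq_sum_of_support_subset _ hsupp]
      rw [Finset.sum_comm]
      rw [← colB w]
      refine Finset.sum_congr rfl fun v _ => ?_
      have : ∀ u ∈ T, A u v * B v w / m v = (B v w / m v) * A u v := fun u _ => by ring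
      rw [Finset.sum_congr rfl this, ← Finset.mul_sum, colA]
      rcases eq_or_ne (m v) 0 with h | h
      · rw [hm0B v h w, h]; ring
      · field_simp
  refine ⟨C, hCcoup, ?_⟩
  have hd : ∀ u v w : V, (ddist E u w : ℝ) ≤ (ddist E u v : ℝ) + (ddist E v w : ℝ) := by
    intro u v w; exact_mod_cast ddist_triangle hsc u v w
  have e1 : (∑ᶠ u, ∑ᶠ w, C u w * (ddist E u w : ℝ)) =
      ∑ u ∈ T, ∑ w ∈ T, C u w * (ddist E u w : ℝ) := by
    refine finsum2_eq_sum fun u w h => ?_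
    exact hCT u w (fun hc => h (by rw [hc]; ring))
  have e2 : (∑ᶠ u, ∑ᶠ v, A u v * (ddist E u v : ℝ)) =
      ∑ u ∈ T, ∑ v ∈ T, A u v * (ddist E u v : ℝ) := by
    refine finsum2_eq_sum fun u v h => ?_
    exact hA' u v (fun hc => h (by rw [hc]; ring))
  have e3 : (∑ᶠ u, ∑ᶠ v, B u v * (ddist E u v : ℝ)) =
      ∑ u ∈ T, ∑ v ∈ T, B u v * (ddist E u v : ℝ) := by
    refine finsum2_eq_sum fun u v h => ?_
    exact hB' u v (fun hc => h (by rw [hc]; ring))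
  rw [e1, e2, e3]
  have step1 : ∑ u ∈ T, ∑ w ∈ T, C u w * (ddist E u w : ℝ) ≤
      ∑ u ∈ T, ∑ w ∈ T, ∑ v ∈ T,
        A u v * B v w / m v * ((ddist E u v : ℝ) + (ddist E v w : ℝ)) := by
    refine Finset.sum_le_sum fun u _ => Finset.sum_le_sum fun w _ => ?_
    rw [hC, Finset.sum_mul]
    refine Finset.sum_le_sum fun v _ => ?_
    have hnn : 0 ≤ A u v * B v w / m v := by
      have := hA0 u v; have := hB0 v w; have := hmnn v; positivity
    exact mul_le_mul_of_nonneg_left (hd u v w) hnn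
  refine le_trans step1 ?_
  have split : ∑ u ∈ T, ∑ w ∈ T, ∑ v ∈ T,
      A u v * B v w / m v * ((ddist E u v : ℝ) + (ddist E v w : ℝ)) =
      (∑ u ∈ T, ∑ w ∈ T, ∑ v ∈ T, A u v * B v w / m v * (ddist E u v : ℝ)) +
      (∑ u ∈ T, ∑ w ∈ T, ∑ v ∈ T, A u v * B v w / m v * (ddist E v w : ℝ)) := by
    rw [← Finset.sum_add_distrib]
    refine Finset.sum_congr rfl fun u _ => ?_
    rw [← Finset.sum_add_distrib]
    refine Finset.sum_congr rfl fun w _ => ?_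
    rw [← Finset.sum_add_distrib]
    refine Finset.sum_congr rfl fun v _ => ?_
    ring
  rw [split]
  have part1 : (∑ u ∈ T, ∑ w ∈ T, ∑ v ∈ T, A u v * B v w / m v * (ddist E u v : ℝ)) ≤
      ∑ u ∈ T, ∑ v ∈ T, A u v * (ddist E u v : ℝ) := by
    refine Finset.sum_le_sum fun u _ => ?_
    rw [Finset.sum_comm]
    refine Finset.sum_le_sum fun v _ => ?_
    have e : ∀ w ∈ T, A u v * B v w / m v * (ddist E u v : ℝ) =
        (A u v * (ddist E u v : ℝ) / m v) * B v w := fun w _ => by ring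
    rw [Finset.sum_congr rfl e, ← Finset.mul_sum, rowB]
    rcases eq_or_ne (m v) 0 with h | h
    · rw [hm0A v h u, h]
      simp
    · rw [div_mul_cancel₀ _ h]
  have part2 : (∑ u ∈ T, ∑ w ∈ T, ∑ v ∈ T, A u v * B v w / m v * (ddist E v w : ℝ)) ≤
      ∑ w ∈ T, ∑ v ∈ T, B v w * (ddist E v w : ℝ) := by
    have c1 : (∑ u ∈ T, ∑ w ∈ T, ∑ v ∈ T, A u v * B v w / m v * (ddist E v w : ℝ)) =
        ∑ w ∈ T, ∑ u ∈ T, ∑ v ∈ T, A u v * B v w / m v * (ddist E v w : ℝ) :=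
      Finset.sum_comm
    rw [c1]
    refine Finset.sum_le_sum fun w _ => ?_
    have c2 : (∑ u ∈ T, ∑ v ∈ T, A u v * B v w / m v * (ddist E v w : ℝ)) =
        ∑ v ∈ T, ∑ u ∈ T, A u v * B v w / m v * (ddist E v w : ℝ) :=
      Finset.sum_comm
    rw [c2]
    refine Finset.sum_le_sum fun v _ => ?_
    have e : ∀ u ∈ T, A u v * B v w / m v * (ddist E v w : ℝ) =
        (B v w * (ddist E v w : ℝ) / m v) * A u v := fun u _ => by ring
    rw [Finset.sum_congr rfl e, ← Finset.mul_sum, colA]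
    rcases eq_or_ne (m v) 0 with h | h
    · rw [hm0B v h w, h]
      simp
    · rw [div_mul_cancel₀ _ h]
  have c3 : (∑ w ∈ T, ∑ v ∈ T, B v w * (ddist E v w : ℝ)) =
      ∑ v ∈ T, ∑ w ∈ T, B v w * (ddist E v w : ℝ) := Finset.sum_comm
  linarith

lemma Wass_triangle (hlf : LocFin E) (hs : NoLoops E) (hsc : StronglyConnected E)
    {α : ℝ} (hIcc : α ∈ Set.Icc (0:ℝ) 1) {x y z : V}
    (hne1 : (WSet E α x y).Nonempty) (hne2 : (WSet E α y z).Nonempty) :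
    Wass E α x z ≤ Wass E α x y + Wass E α y z := by
  refine le_of_forall_pos_le_add fun ε hε => ?_
  obtain ⟨wA, hwA, hwAlt⟩ := Real.lt_sInf_add_pos hne1 (half_pos hε)
  obtain ⟨wB, hwB, hwBlt⟩ := Real.lt_sInf_add_pos hne2 (half_pos hε)
  obtain ⟨A, hA, rfl⟩ := hwA
  obtain ⟨B, hB, rfl⟩ := hwB
  obtain ⟨C, hC, hCcost⟩ := gluing hlf hs hsc hIcc hA hB
  calc Wass E α x z ≤ ∑ᶠ u, ∑ᶠ w, C u w * (ddist E u w : ℝ) := Wass_le hC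
    _ ≤ _ + _ := hCcost
    _ ≤ Wass E α x y + Wass E α y z + ε := by
        rw [Wass_eq_sInf, Wass_eq_sInf]
        linarith

lemma tendsto_one_div_one_sub_atTop :
    Tendsto (fun α : ℝ => 1 / (1 - α)) (𝓝[<] (1:ℝ)) atTop := by
  have h1 : Tendsto (fun α : ℝ => 1 - α) (𝓝[<] (1:ℝ)) (𝓝[>] (0:ℝ)) := by
    rw [tendsto_nhdsWithin_iff]
    constructor
    · have : Tendsto (fun α : ℝ => 1 - α) (𝓝 (1:ℝ)) (𝓝 (1 - 1 : ℝ)) :=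
        (continuous_const.sub continuous_id).tendsto 1
      simpa using this.mono_left nhdsWithin_le_nhds
    · filter_upwards [self_mem_nhdsWithin] with α hα
      simp only [Set.mem_Ioi]
      simp only [Set.mem_Iio] at hα
      linarith
  simpa [one_div, Function.comp_def] using tendsto_inv_nhdsGT_zero.comp h1

lemma ratio_eq_of_edge (hlf : LocFin E) (hs : NoLoops E) (hsc : StronglyConnected E)
    {u v : V} (hk : ∃ k, RicciTendsto E u v k) (hE : E u v) : ratio E u = ratio E v := by
  by_contra hne
  have hempty : ∀ α : ℝ, α ≠ 1 → WSet E α u v = ∅ := by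
    intro α hα
    rw [Set.eq_empty_iff_forall_notMem]
    rintro w ⟨A, hA, rfl⟩
    exact hne (ratio_eq_of_coupling hlf hs hsc hα hA)
  have hricci : ∀ α : ℝ, α ≠ 1 → ricciAlpha E α u v = 1 := by
    intro α hα
    unfold ricciAlpha
    rw [Wass_eq_sInf, hempty α hα, Real.sInf_empty]
    simp
  obtain ⟨k, hk⟩ := hk
  have heq : (fun α : ℝ => 1 / (1 - α)) =ᶠ[𝓝[<] (1:ℝ)]
      (fun α : ℝ => ricciAlpha E α u v / (1 - α)) := by
    filter_upwards [self_mem_nhdsWithin] with α hα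
    simp only [Set.mem_Iio] at hα
    rw [hricci α (ne_of_lt hα)]
  exact not_tendsto_nhds_of_tendsto_atTop
    (tendsto_one_div_one_sub_atTop.congr' heq) k hk

lemma ratio_const (hlf : LocFin E) (hs : NoLoops E) (hsc : StronglyConnected E)
    (hedge : ∀ u v : V, E u v → ∃ k, RicciTendsto E u v k) (x y : V) :
    ratio E x = ratio E y := by
  obtain ⟨n, hn, f, hf0, hfn, hw⟩ := hsc x y
  have key : ∀ i, i ≤ n → ratio E x = ratio E (f i) := by
    intro i
    induction i with
    | zero => intro _; rw [hf0]
    | succ m ih =>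
      intro hm
      have hE : E (f m) (f (m+1)) := hw m (by omega)
      rw [ih (by omega), ratio_eq_of_edge hlf hs hsc (hedge _ _ hE) hE]
  rw [← hfn]
  exact key n le_rfl

lemma WSet_nonempty' (hlf : LocFin E) (hs : NoLoops E) (hsc : StronglyConnected E)
    {α : ℝ} (hα : α ∈ Set.Ioo (0:ℝ) 1) {x y : V} (hr : ratio E x = ratio E y) :
    (WSet E α x y).Nonempty := by
  obtain ⟨A, hA⟩ := coupling_exists hlf hs hsc hα hr
  exact ⟨_, A, hA, rfl⟩

lemma Wass_chain (hlf : LocFin E) (hs : NoLoops E) (hsc : StronglyConnected E)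
    (hratio : ∀ u v : V, ratio E u = ratio E v) {α : ℝ} (hα : α ∈ Set.Ioo (0:ℝ) 1)
    {f : ℕ → V} : ∀ n, IsDiWalk E n f →
    Wass E α (f 0) (f n) ≤ ∑ i ∈ Finset.range n, Wass E α (f i) (f (i+1)) := by
  have hIcc : α ∈ Set.Icc (0:ℝ) 1 := ⟨hα.1.le, hα.2.le⟩
  intro n
  induction n with
  | zero => intro _; simpa using Wass_self_nonpos hlf hsc hIcc (f 0)
  | succ m ih =>
    intro hw
    have h1 := ih (fun i hi => hw i (by omega))
    have h2 : Wass E α (f 0) (f (m+1)) ≤ Wass E α (f 0) (f m) + Wass E α (f m) (f (m+1)) :=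
      Wass_triangle hlf hs hsc hIcc (WSet_nonempty' hlf hs hsc hα (hratio _ _))
        (WSet_nonempty' hlf hs hsc hα (hratio _ _))
    rw [Finset.sum_range_succ]
    linarith

lemma sum_mAlpha_dist_x (hlf : LocFin E) (hs : NoLoops E) (hsc : StronglyConnected E)
    {α : ℝ} (hIcc : α ∈ Set.Icc (0:ℝ) 1) (T : Finset V) (x : V) :
    ∑ u ∈ T, mAlpha E α x u * (ddist E x u : ℝ) ≤ 1 - α := by
  classical
  have h1 : (0:ℝ) ≤ 1 - α := by linarith [hIcc.2]
  have hdeg : (0:ℝ) < deg E x := by exact_mod_cast deg_pos hlf hsc x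
  have bound : ∀ u, mAlpha E α x u * (ddist E x u : ℝ) ≤
      if E x u then (1-α)/(deg E x : ℝ) else 0 := by
    intro u
    rcases eq_or_ne u x with rfl | hne
    · rw [if_neg (hs u), ddist_self]
      simp
    · unfold mAlpha
      rw [if_neg hne]
      by_cases hE : E x u
      · rw [if_pos hE]
        have hdle : (ddist E x u : ℝ) ≤ 1 := by
          exact_mod_cast ddist_le (edge_mem_wset hE)
        have hc : (0:ℝ) ≤ (1-α)/(deg E x : ℝ) := by positivity
        nlinarith [show (0:ℝ) ≤ (ddist E x u : ℝ) from Nat.cast_nonneg _]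
      · rw [if_neg hE]
        simp
  calc ∑ u ∈ T, mAlpha E α x u * (ddist E x u : ℝ)
      ≤ ∑ u ∈ T, (if E x u then (1-α)/(deg E x : ℝ) else 0) :=
        Finset.sum_le_sum fun u _ => bound u
    _ = ∑ u ∈ T.filter (fun u => E x u), (1-α)/(deg E x : ℝ) :=
        (Finset.sum_filter _ _).symm
    _ ≤ ∑ u ∈ (outN_finite hlf x).toFinset, (1-α)/(deg E x : ℝ) := by
        refine Finset.sum_le_sum_of_subset_of_nonneg ?_ (fun _ _ _ => by positivity)
        intro u hu
        rw [Set.Finite.mem_toFinset]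
        exact (Finset.mem_filter.1 hu).2
    _ = (outDeg E x : ℝ) * ((1-α)/(deg E x : ℝ)) := by
        rw [Finset.sum_const, nsmul_eq_mul,
          show (outN_finite hlf x).toFinset.card = outDeg E x from
            (Set.ncard_eq_toFinset_card _ (outN_finite hlf x)).symm]
    _ ≤ 1 - α := by
        have hle : (outDeg E x : ℝ) ≤ (deg E x : ℝ) := by exact_mod_cast outDeg_le_deg hlf
        have e : (outDeg E x : ℝ) * ((1-α)/(deg E x : ℝ)) =
            ((outDeg E x : ℝ)/(deg E x : ℝ)) * (1-α) := by ring
        rw [e]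
        have h2 : (outDeg E x : ℝ)/(deg E x : ℝ) ≤ 1 := by rw [div_le_one hdeg]; exact hle
        nlinarith [mul_nonneg (sub_nonneg.2 h2) h1]

lemma sum_mAlpha_dist_y (hlf : LocFin E) (hs : NoLoops E) (hsc : StronglyConnected E)
    {α : ℝ} (hIcc : α ∈ Set.Icc (0:ℝ) 1) (T : Finset V) (y : V) {D : ℝ}
    (hD : ∀ v, E y v → (ddist E v y : ℝ) ≤ D) (hD0 : 0 ≤ D) :
    ∑ v ∈ T, mAlpha E α y v * (ddist E v y : ℝ) ≤ (1 - α) * D := by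
  classical
  have h1 : (0:ℝ) ≤ 1 - α := by linarith [hIcc.2]
  have hdeg : (0:ℝ) < deg E y := by exact_mod_cast deg_pos hlf hsc y
  have bound : ∀ v, mAlpha E α y v * (ddist E v y : ℝ) ≤
      if E y v then (1-α)/(deg E y : ℝ) * D else 0 := by
    intro v
    rcases eq_or_ne v y with rfl | hne
    · rw [if_neg (hs v), ddist_self]
      simp
    · unfold mAlpha
      rw [if_neg hne]
      by_cases hE : E y v
      · rw [if_pos hE, if_pos hE]
        have hdle : (ddist E v y : ℝ) ≤ D := hD v hE
        have hc : (0:ℝ) ≤ (1-α)/(deg E y : ℝ) := by positivity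
        nlinarith [show (0:ℝ) ≤ (ddist E v y : ℝ) from Nat.cast_nonneg _]
      · rw [if_neg hE, if_neg hE]
        simp
  calc ∑ v ∈ T, mAlpha E α y v * (ddist E v y : ℝ)
      ≤ ∑ v ∈ T, (if E y v then (1-α)/(deg E y : ℝ) * D else 0) :=
        Finset.sum_le_sum fun v _ => bound v
    _ = ∑ v ∈ T.filter (fun v => E y v), (1-α)/(deg E y : ℝ) * D :=
        (Finset.sum_filter _ _).symm
    _ ≤ ∑ v ∈ (outN_finite hlf y).toFinset, (1-α)/(deg E y : ℝ) * D := by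
        refine Finset.sum_le_sum_of_subset_of_nonneg ?_ (fun _ _ _ => by positivity)
        intro v hv
        rw [Set.Finite.mem_toFinset]
        exact (Finset.mem_filter.1 hv).2
    _ = (outDeg E y : ℝ) * ((1-α)/(deg E y : ℝ) * D) := by
        rw [Finset.sum_const, nsmul_eq_mul,
          show (outN_finite hlf y).toFinset.card = outDeg E y from
            (Set.ncard_eq_toFinset_card _ (outN_finite hlf y)).symm]
    _ ≤ (1 - α) * D := by
        have hle : (outDeg E y : ℝ) ≤ (deg E y : ℝ) := by exact_mod_cast outDeg_le_deg hlf
        have e : (outDeg E y : ℝ) * ((1-α)/(deg E y : ℝ) * D) =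
            ((outDeg E y : ℝ)/(deg E y : ℝ)) * ((1-α) * D) := by ring
        rw [e]
        have h2 : (outDeg E y : ℝ)/(deg E y : ℝ) ≤ 1 := by rw [div_le_one hdeg]; exact hle
        nlinarith [mul_nonneg (sub_nonneg.2 h2) (mul_nonneg h1 hD0)]

lemma Wass_lower (hlf : LocFin E) (hs : NoLoops E) (hsc : StronglyConnected E)
    {α : ℝ} (hIcc : α ∈ Set.Icc (0:ℝ) 1) {x y : V} {D : ℝ}
    (hD : ∀ v, E y v → (ddist E v y : ℝ) ≤ D) (hD0 : 0 ≤ D)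
    (hne : (WSet E α x y).Nonempty) :
    (ddist E x y : ℝ) - (1-α) * (1 + D) ≤ Wass E α x y := by
  have h1 : (0:ℝ) ≤ 1 - α := by linarith [hIcc.2]
  refine le_csInf hne ?_
  rintro w ⟨A, hA, rfl⟩
  obtain ⟨T, hT⟩ := coupling_finset hA.1
  have hA0 : ∀ u v, 0 ≤ A u v := fun u v => (hA.2.1 u v).1
  have rowA : ∀ u, ∑ v ∈ T, A u v = mAlpha E α x u := fun u => by
    rw [← hA.2.2.1 u]
    exact (finsum_eq_sum_of_support_subset _ (fun v hv => (hT u v hv).2)).symm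
  have colA : ∀ v, ∑ u ∈ T, A u v = mAlpha E α y v := fun v => by
    rw [← hA.2.2.2 v]
    exact (finsum_eq_sum_of_support_subset _ (fun u hu => (hT u v hu).1)).symm
  have e1 : (∑ᶠ u, ∑ᶠ v, A u v * (ddist E u v : ℝ)) =
      ∑ u ∈ T, ∑ v ∈ T, A u v * (ddist E u v : ℝ) :=
    finsum2_eq_sum fun u v h => hT u v (fun hc => h (by rw [hc]; ring))
  rw [e1]
  set n : ℝ := (ddist E x y : ℝ) with hn
  have hn0 : 0 ≤ n := Nat.cast_nonneg _
  have step : ∑ u ∈ T, ∑ v ∈ T, A u v * (n - (ddist E x u : ℝ) - (ddist E v y : ℝ)) ≤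
      ∑ u ∈ T, ∑ v ∈ T, A u v * (ddist E u v : ℝ) := by
    refine Finset.sum_le_sum fun u _ => Finset.sum_le_sum fun v _ => ?_
    refine mul_le_mul_of_nonneg_left ?_ (hA0 u v)
    have t1 : ddist E x y ≤ ddist E x u + ddist E u v + ddist E v y := by
      have h2 := ddist_triangle hsc x u y
      have h3 := ddist_triangle hsc u v y
      omega
    have t2 : (ddist E x y : ℝ) ≤ (ddist E x u : ℝ) + (ddist E u v : ℝ) + (ddist E v y : ℝ) := by
      exact_mod_cast t1
    rw [hn]; linarith
  refine le_trans ?_ step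
  have eA : (∑ u ∈ T, ∑ v ∈ T, A u v * n) = (∑ u ∈ T, mAlpha E α x u) * n := by
    rw [Finset.sum_mul]
    exact Finset.sum_congr rfl fun u _ => by rw [← Finset.sum_mul, rowA]
  have eB : (∑ u ∈ T, ∑ v ∈ T, A u v * (ddist E x u : ℝ)) =
      ∑ u ∈ T, mAlpha E α x u * (ddist E x u : ℝ) :=
    Finset.sum_congr rfl fun u _ => by rw [← Finset.sum_mul, rowA]
  have eC : (∑ u ∈ T, ∑ v ∈ T, A u v * (ddist E v y : ℝ)) =
      ∑ v ∈ T, mAlpha E α y v * (ddist E v y : ℝ) := by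
    rw [Finset.sum_comm]
    exact Finset.sum_congr rfl fun v _ => by rw [← Finset.sum_mul, colA]
  have expand : ∑ u ∈ T, ∑ v ∈ T, A u v * (n - (ddist E x u : ℝ) - (ddist E v y : ℝ)) =
      (∑ u ∈ T, mAlpha E α x u) * n - (∑ u ∈ T, mAlpha E α x u * (ddist E x u : ℝ))
        - (∑ v ∈ T, mAlpha E α y v * (ddist E v y : ℝ)) := by
    rw [Finset.sum_congr rfl fun u (hu : u ∈ T) => Finset.sum_congr rfl fun v (hv : v ∈ T) =>
      (by ring : A u v * (n - (ddist E x u : ℝ) - (ddist E v y : ℝ)) =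
        A u v * n - A u v * (ddist E x u : ℝ) - A u v * (ddist E v y : ℝ))]
    simp only [Finset.sum_sub_distrib]
    rw [eA, eB, eC]
  rw [expand]
  have hmass : 1 ≤ ∑ u ∈ T, mAlpha E α x u := by
    have hsupp : ∀ u, mAlpha E α x u ≠ 0 → u ∈ T := by
      intro u hu
      rw [← rowA u] at hu
      obtain ⟨v, -, hv⟩ := Finset.exists_ne_zero_of_sum_ne_zero hu
      exact (hT u v hv).1
    have e2 : ∑ u ∈ T, mAlpha E α x u = ∑ᶠ u, mAlpha E α x u :=
      (finsum_eq_sum_of_support_subset _ hsupp).symm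
    rw [e2, finsum_mAlpha hlf hs hsc]
    have := ratio_ge_one hlf hsc x
    nlinarith
  have b1 := sum_mAlpha_dist_x hlf hs hsc hIcc T x
  have b2 := sum_mAlpha_dist_y hlf hs hsc hIcc T y hD hD0
  nlinarith

lemma mAlpha_self (γ : ℝ) (x : V) :
    mAlpha E γ x x = γ + (1-γ) * (inDeg E x : ℝ) / (deg E x : ℝ) := if_pos rfl

lemma mAlpha_out {x v : V} (hne : v ≠ x) (hE : E x v) (γ : ℝ) :
    mAlpha E γ x v = (1-γ) / (deg E x : ℝ) := by
  unfold mAlpha; rw [if_neg hne, if_pos hE]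

lemma mAlpha_zero {x v : V} (hne : v ≠ x) (hE : ¬ E x v) (γ : ℝ) :
    mAlpha E γ x v = 0 := by
  unfold mAlpha; rw [if_neg hne, if_neg hE]

lemma Wass_concave (hlf : LocFin E) (hs : NoLoops E) (hsc : StronglyConnected E)
    {α β : ℝ} (hα : α ∈ Set.Ioo (0:ℝ) 1) (hβ : β ∈ Set.Ioo (0:ℝ) 1) (hab : α ≤ β)
    {x y : V} (hne : (WSet E α x y).Nonempty) :
    Wass E β x y ≤ (1-β)/(1-α) * Wass E α x y + (1 - (1-β)/(1-α)) * (ddist E x y : ℝ) := by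
  classical
  have h1α : (0:ℝ) < 1 - α := by linarith [hα.2]
  have h1β : (0:ℝ) < 1 - β := by linarith [hβ.2]
  set l : ℝ := (1-β)/(1-α) with hl
  have hl0 : 0 < l := by positivity
  have hl1 : l ≤ 1 := by rw [hl, div_le_one h1α]; linarith
  have hlm : l * (1-α) = 1-β := by rw [hl]; field_simp
  have hβ' : β = 1 - l * (1-α) := by rw [hlm]; ring
  refine le_of_forall_pos_le_add fun ε hε => ?_
  obtain ⟨w, hwmem, hwlt⟩ := Real.lt_sInf_add_pos hne hε
  obtain ⟨A, hA, rfl⟩ := hwmem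
  obtain ⟨T, hT⟩ := coupling_finset hA.1
  have hA0 : ∀ u v, 0 ≤ A u v := fun u v => (hA.2.1 u v).1
  have hA1 : ∀ u v, A u v ≤ 1 := fun u v => (hA.2.1 u v).2
  set B : V → V → ℝ := fun u v =>
    l * A u v + (1-l) * ((if u = x then (1:ℝ) else 0) * (if v = y then (1:ℝ) else 0)) with hBdef
  have hBzero : ∀ u v, A u v = 0 → ¬(u = x ∧ v = y) → B u v = 0 := by
    intro u v hz hc
    rw [hBdef]
    simp only [hz, mul_zero, zero_add]
    rcases not_and_or.1 hc with hc | hc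
    · rw [if_neg hc]; ring
    · rw [if_neg hc]; ring
  have hBrow : ∀ u, ∑ᶠ v, B u v = l * mAlpha E α x u + (1-l) * (if u = x then 1 else 0) := by
    intro u
    have hf1 : (Function.support fun v => l * A u v).Finite := by
      apply Set.Finite.subset T.finite_toSet
      intro v hv
      have hAv : A u v ≠ 0 := by intro hc; apply hv; simp [hc]
      exact (hT u v hAv).2
    have hf2 : (Function.support fun v =>
        (1-l) * ((if u = x then (1:ℝ) else 0) * (if v = y then (1:ℝ) else 0))).Finite := by
      apply Set.Finite.subset (Set.finite_singleton y)
      intro v hv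
      by_contra hc
      apply hv
      have hvy : v ≠ y := by simpa using hc
      simp [hvy]
    calc ∑ᶠ v, B u v
        = ∑ᶠ v, (l * A u v +
            (1-l) * ((if u = x then (1:ℝ) else 0) * (if v = y then (1:ℝ) else 0))) := by
          rw [hBdef]
      _ = (∑ᶠ v, l * A u v) + ∑ᶠ v,
            (1-l) * ((if u = x then (1:ℝ) else 0) * (if v = y then (1:ℝ) else 0)) :=
          finsum_add_distrib hf1 hf2
      _ = l * mAlpha E α x u + (1-l) * (if u = x then 1 else 0) := by
          congr 1
          · rw [← mul_finsum' _ _ (show (Function.support fun v => A u v).Finite by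
              apply Set.Finite.subset T.finite_toSet
              intro v hv
              exact (hT u v hv).2), hA.2.2.1 u]
          · rw [finsum_eq_single _ y (fun v hv => by rw [if_neg hv]; ring), if_pos rfl]
            ring
  have hBcol : ∀ v, ∑ᶠ u, B u v = l * mAlpha E α y v + (1-l) * (if v = y then 1 else 0) := by
    intro v
    have hf1 : (Function.support fun u => l * A u v).Finite := by
      apply Set.Finite.subset T.finite_toSet
      intro u hu
      have hAu : A u v ≠ 0 := by intro hc; apply hu; simp [hc]
      exact (hT u v hAu).1
    have hf2 : (Function.support fun u =>
        (1-l) * ((if u = x then (1:ℝ) else 0) * (if v = y then (1:ℝ) else 0))).Finite := by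
      apply Set.Finite.subset (Set.finite_singleton x)
      intro u hu
      by_contra hc
      apply hu
      have hux : u ≠ x := by simpa using hc
      simp [hux]
    calc ∑ᶠ u, B u v
        = ∑ᶠ u, (l * A u v +
            (1-l) * ((if u = x then (1:ℝ) else 0) * (if v = y then (1:ℝ) else 0))) := by
          rw [hBdef]
      _ = (∑ᶠ u, l * A u v) + ∑ᶠ u,
            (1-l) * ((if u = x then (1:ℝ) else 0) * (if v = y then (1:ℝ) else 0)) :=
          finsum_add_distrib hf1 hf2
      _ = l * mAlpha E α y v + (1-l) * (if v = y then 1 else 0) := by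
          congr 1
          · rw [← mul_finsum' _ _ (show (Function.support fun u => A u v).Finite by
              apply Set.Finite.subset T.finite_toSet
              intro u hu
              exact (hT u v hu).1), hA.2.2.2 v]
          · rw [finsum_eq_single _ x (fun u hu => by rw [if_neg hu]; ring), if_pos rfl]
            ring
  have hBcoup : IsCoupling E β x y B := by
    refine ⟨?_, ?_, ?_, ?_⟩
    · refine Set.Finite.subset (((insert x T) ×ˢ (insert y T)).finite_toSet) ?_
      rintro ⟨u, v⟩ hp
      simp only [Function.mem_support] at hp
      simp only [Finset.coe_product, Set.mem_prod, Finset.coe_insert, Set.mem_insert_iff,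
        Finset.mem_coe]
      rcases eq_or_ne (A u v) 0 with hz | hz
      · have hxy' : u = x ∧ v = y := by
          by_contra hc
          exact hp (hBzero u v hz hc)
        exact ⟨Or.inl hxy'.1, Or.inl hxy'.2⟩
      · exact ⟨Or.inr (hT u v hz).1, Or.inr (hT u v hz).2⟩
    · intro u v
      have h1 : (if u = x then (1:ℝ) else 0) * (if v = y then (1:ℝ) else 0) ≤ 1 := by
        split_ifs <;> norm_num
      have h0 : (0:ℝ) ≤ (if u = x then (1:ℝ) else 0) * (if v = y then (1:ℝ) else 0) := by
        split_ifs <;> norm_num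
      have h2 := hA1 u v
      have h3 := hA0 u v
      constructor
      · show (0:ℝ) ≤ l * A u v +
          (1-l) * ((if u = x then (1:ℝ) else 0) * (if v = y then (1:ℝ) else 0))
        nlinarith
      · show l * A u v +
          (1-l) * ((if u = x then (1:ℝ) else 0) * (if v = y then (1:ℝ) else 0)) ≤ 1
        nlinarith
    · intro u
      rw [hBrow u]
      rcases eq_or_ne u x with rfl | hne'
      · rw [mAlpha_self, mAlpha_self, if_pos rfl, hβ']
        ring
      · rw [if_neg hne']
        by_cases hE : E x u
        · rw [mAlpha_out hne' hE, mAlpha_out hne' hE, hβ']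
          ring
        · rw [mAlpha_zero hne' hE, mAlpha_zero hne' hE]
          ring
    · intro v
      rw [hBcol v]
      rcases eq_or_ne v y with rfl | hne'
      · rw [mAlpha_self, mAlpha_self, if_pos rfl, hβ']
        ring
      · rw [if_neg hne']
        by_cases hE : E y v
        · rw [mAlpha_out hne' hE, mAlpha_out hne' hE, hβ']
          ring
        · rw [mAlpha_zero hne' hE, mAlpha_zero hne' hE]
          ring
  have hcost : (∑ᶠ u, ∑ᶠ v, B u v * (ddist E u v : ℝ)) =
      l * (∑ᶠ u, ∑ᶠ v, A u v * (ddist E u v : ℝ)) + (1-l) * (ddist E x y : ℝ) := by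
    set T' : Finset V := insert x (insert y T) with hT'
    have hTsub : ∀ {u : V}, u ∈ T → u ∈ T' := fun hu =>
      Finset.mem_insert_of_mem (Finset.mem_insert_of_mem hu)
    have hxT : x ∈ T' := Finset.mem_insert_self _ _
    have hyT : y ∈ T' := Finset.mem_insert_of_mem (Finset.mem_insert_self _ _)
    have hBT : ∀ u v, B u v ≠ 0 → u ∈ T' ∧ v ∈ T' := by
      intro u v hB
      rcases eq_or_ne (A u v) 0 with hz | hz
      · have hxy' : u = x ∧ v = y := by
          by_contra hc
          exact hB (hBzero u v hz hc)
        rw [hxy'.1, hxy'.2]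
        exact ⟨hxT, hyT⟩
      · exact ⟨hTsub (hT u v hz).1, hTsub (hT u v hz).2⟩
    have e1 : (∑ᶠ u, ∑ᶠ v, B u v * (ddist E u v : ℝ)) =
        ∑ u ∈ T', ∑ v ∈ T', B u v * (ddist E u v : ℝ) :=
      finsum2_eq_sum fun u v h => hBT u v (fun hc => h (by rw [hc]; ring))
    have e2 : (∑ᶠ u, ∑ᶠ v, A u v * (ddist E u v : ℝ)) =
        ∑ u ∈ T', ∑ v ∈ T', A u v * (ddist E u v : ℝ) :=
      finsum2_eq_sum fun u v h => by
        have hm := hT u v (fun hc => h (by rw [hc]; ring))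
        exact ⟨hTsub hm.1, hTsub hm.2⟩
    rw [e1, e2]
    have indcost : (∑ u ∈ T', ∑ v ∈ T',
        ((if u = x then (1:ℝ) else 0) * (if v = y then (1:ℝ) else 0)) * (ddist E u v : ℝ))
        = (ddist E x y : ℝ) := by
      rw [Finset.sum_eq_single_of_mem x hxT (fun b _ hb => Finset.sum_eq_zero fun v _ => by
        rw [if_neg hb]; ring)]
      rw [Finset.sum_eq_single_of_mem y hyT (fun b _ hb => by rw [if_neg hb]; ring)]
      rw [if_pos rfl, if_pos rfl]
      ring
    calc ∑ u ∈ T', ∑ v ∈ T', B u v * (ddist E u v : ℝ)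
        = ∑ u ∈ T', ∑ v ∈ T', (l * (A u v * (ddist E u v : ℝ)) +
            (1-l) * (((if u = x then (1:ℝ) else 0) * (if v = y then (1:ℝ) else 0)) *
              (ddist E u v : ℝ))) :=
          Finset.sum_congr rfl fun u _ => Finset.sum_congr rfl fun v _ => by rw [hBdef]; ring
      _ = (∑ u ∈ T', ∑ v ∈ T', l * (A u v * (ddist E u v : ℝ)))
          + ∑ u ∈ T', ∑ v ∈ T', (1-l) * (((if u = x then (1:ℝ) else 0) *
              (if v = y then (1:ℝ) else 0)) * (ddist E u v : ℝ)) := by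
          simp only [Finset.sum_add_distrib]
      _ = l * (∑ u ∈ T', ∑ v ∈ T', A u v * (ddist E u v : ℝ))
          + (1-l) * ∑ u ∈ T', ∑ v ∈ T', ((if u = x then (1:ℝ) else 0) *
              (if v = y then (1:ℝ) else 0)) * (ddist E u v : ℝ) := by
          rw [Finset.mul_sum, Finset.mul_sum]
          congr 1
          · exact Finset.sum_congr rfl fun u _ => (Finset.mul_sum _ _ _).symm
          · exact Finset.sum_congr rfl fun u _ => (Finset.mul_sum _ _ _).symm
      _ = _ := by rw [indcost]
  have hfinal : Wass E β x y ≤ l * (∑ᶠ u, ∑ᶠ v, A u v * (ddist E u v : ℝ))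
      + (1-l) * (ddist E x y : ℝ) := by
    rw [← hcost]
    exact Wass_le hBcoup
  have : l * (∑ᶠ u, ∑ᶠ v, A u v * (ddist E u v : ℝ)) ≤ l * (Wass E α x y + ε) :=
    mul_le_mul_of_nonneg_left (le_of_lt hwlt) hl0.le
  have hWnn : 0 ≤ Wass E α x y := Wass_nonneg
  nlinarith

lemma ricci_div_mono (hlf : LocFin E) (hs : NoLoops E) (hsc : StronglyConnected E)
    {x y : V} (hxy : x ≠ y) (hratio : ∀ u v : V, ratio E u = ratio E v) :
    MonotoneOn (fun γ : ℝ => ricciAlpha E γ x y / (1 - γ)) (Set.Ioo (0:ℝ) 1) := by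
  intro α hα β hβ hab
  show ricciAlpha E α x y / (1 - α) ≤ ricciAlpha E β x y / (1 - β)
  have h1α : (0:ℝ) < 1 - α := by linarith [hα.2]
  have h1β : (0:ℝ) < 1 - β := by linarith [hβ.2]
  have hn0 : (0:ℝ) < (ddist E x y : ℝ) := by
    exact_mod_cast Nat.pos_of_ne_zero (ddist_ne_zero hsc hxy)
  set n : ℝ := (ddist E x y : ℝ) with hn
  have hne := WSet_nonempty' hlf hs hsc hα (hratio x y)
  have hcon := Wass_concave hlf hs hsc hα hβ hab hne
  set l : ℝ := (1-β)/(1-α) with hl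
  have hlm : l * (1-α) = 1-β := by rw [hl]; field_simp
  set Wα : ℝ := Wass E α x y with hWα
  set Wβ : ℝ := Wass E β x y with hWβ
  have hb : Wβ/n ≤ l*(Wα/n) + (1-l) := by
    have h2 : Wβ/n ≤ (l*Wα + (1-l)*n)/n := by gcongr
    have h3 : (l*Wα + (1-l)*n)/n = l*(Wα/n) + (1-l) := by field_simp
    linarith
  have key : l * (1 - Wα/n) ≤ 1 - Wβ/n := by
    have e : l*(1-Wα/n) = l - l*(Wα/n) := by ring
    linarith
  have hrα : ricciAlpha E α x y = 1 - Wα/n := rfl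
  have hrβ : ricciAlpha E β x y = 1 - Wβ/n := rfl
  rw [hrα, hrβ, div_le_div_iff₀ h1α h1β]
  have hmul := mul_le_mul_of_nonneg_right key h1α.le
  have e2 : l * (1 - Wα/n) * (1-α) = (1 - Wα/n) * (1-β) := by rw [← hlm]; ring
  linarith

lemma ricci_div_le (hlf : LocFin E) (hs : NoLoops E) (hsc : StronglyConnected E)
    {x y : V} (hxy : x ≠ y) (hratio : ∀ u v : V, ratio E u = ratio E v) {D : ℝ}
    (hD : ∀ v, E y v → (ddist E v y : ℝ) ≤ D) (hD0 : 0 ≤ D) {α : ℝ} (hα : α ∈ Set.Ioo (0:ℝ) 1) :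
    ricciAlpha E α x y / (1-α) ≤ (1 + D)/(ddist E x y : ℝ) := by
  have h1α : (0:ℝ) < 1 - α := by linarith [hα.2]
  have hn0 : (0:ℝ) < (ddist E x y : ℝ) := by
    exact_mod_cast Nat.pos_of_ne_zero (ddist_ne_zero hsc hxy)
  have hne := WSet_nonempty' hlf hs hsc hα (hratio x y)
  have hlow := Wass_lower hlf hs hsc ⟨hα.1.le, hα.2.le⟩ hD hD0 hne
  set n : ℝ := (ddist E x y : ℝ) with hn
  set W : ℝ := Wass E α x y with hW
  have hr : ricciAlpha E α x y = 1 - W/n := rfl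
  rw [hr, div_le_div_iff₀ h1α hn0]
  have e : (1 - W/n)*n = n - W := by field_simp
  rw [e]
  nlinarith

theorem stmt_4' (E : V → V → Prop) (hlf : LocFin E) (hs : NoLoops E)
    (hsc : StronglyConnected E) (κ₀ : ℝ)
    (h : ∀ u v : V, E u v → ∃ k : ℝ, RicciTendsto E u v k ∧ κ₀ ≤ k) :
    ∀ x y : V, x ≠ y →
      (∃ n, 1 ≤ n ∧ ∃ f : ℕ → V, f 0 = x ∧ f n = y ∧ IsDiWalk E n f) →
      ∃ k : ℝ, RicciTendsto E x y k ∧ κ₀ ≤ k := by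
  intro x y hxy _hpath
  have hratio : ∀ u v : V, ratio E u = ratio E v :=
    ratio_const hlf hs hsc (fun u v hE => (h u v hE).imp fun k hk => hk.1)
  set N : ℕ := ddist E x y with hN
  have hNne : N ≠ 0 := ddist_ne_zero hsc hxy
  have hn0 : (0:ℝ) < (N : ℝ) := by exact_mod_cast Nat.pos_of_ne_zero hNne
  obtain ⟨D, hD0, hD⟩ : ∃ D : ℝ, 0 ≤ D ∧ ∀ v, E y v → (ddist E v y : ℝ) ≤ D := by
    classical
    refine ⟨∑ v ∈ (outN_finite hlf y).toFinset, ((ddist E v y : ℝ)),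
      Finset.sum_nonneg fun v _ => by positivity, fun v hv => ?_⟩
    refine Finset.single_le_sum (f := fun v => ((ddist E v y : ℝ))) (fun i _ => by positivity) ?_
    rw [Set.Finite.mem_toFinset]
    exact hv
  set g : ℝ → ℝ := fun γ => ricciAlpha E γ x y / (1 - γ) with hg
  have hmono : MonotoneOn g (Set.Ioo 0 1) := ricci_div_mono hlf hs hsc hxy hratio
  have hbdd : BddAbove (g '' Set.Ioo 0 1) := by
    refine ⟨(1 + D)/(N : ℝ), ?_⟩
    rintro _ ⟨γ, hγ, rfl⟩
    exact ricci_div_le hlf hs hsc hxy hratio hD hD0 hγ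
  have htend : Tendsto g (𝓝[<] (1:ℝ)) (𝓝 (sSup (g '' Set.Ioo 0 1))) :=
    MonotoneOn.tendsto_nhdsWithin_Ioo_left ⟨1/2, by norm_num⟩ hmono hbdd
  refine ⟨sSup (g '' Set.Ioo 0 1), htend, ?_⟩
  obtain ⟨f, hf0, hfn, hw⟩ := exists_walk_ddist hsc x y
  rw [← hN] at hfn hw
  have hch : ∀ i : ℕ, ∃ kk : ℝ, i < N → (RicciTendsto E (f i) (f (i+1)) kk ∧ κ₀ ≤ kk) := by
    intro i
    by_cases hi : i < N
    · obtain ⟨kk, h1, h2⟩ := h (f i) (f (i+1)) (hw i hi)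
      exact ⟨kk, fun _ => ⟨h1, h2⟩⟩
    · exact ⟨0, fun hi' => absurd hi' hi⟩
  choose k hk using hch
  set F : ℝ → ℝ := fun γ =>
    (∑ i ∈ Finset.range N, ricciAlpha E γ (f i) (f (i+1)) / (1-γ)) / (N : ℝ) with hF
  have hpt : ∀ γ ∈ Set.Ioo (0:ℝ) 1, F γ ≤ g γ := by
    intro γ hγ
    have h1γ : (0:ℝ) < 1 - γ := by linarith [hγ.2]
    have hWc := Wass_chain hlf hs hsc hratio hγ N hw
    rw [hf0, hfn] at hWc
    have hedge : ∀ i ∈ Finset.range N,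
        ricciAlpha E γ (f i) (f (i+1)) = 1 - Wass E γ (f i) (f (i+1)) := by
      intro i hi
      unfold ricciAlpha
      rw [ddist_edge hs (hw i (Finset.mem_range.1 hi))]
      norm_num
    have hsum : (∑ i ∈ Finset.range N, ricciAlpha E γ (f i) (f (i+1))) =
        (N : ℝ) - ∑ i ∈ Finset.range N, Wass E γ (f i) (f (i+1)) := by
      rw [Finset.sum_congr rfl hedge, Finset.sum_sub_distrib, Finset.sum_const,
        Finset.card_range, nsmul_eq_mul, mul_one]
    have core : (∑ i ∈ Finset.range N, ricciAlpha E γ (f i) (f (i+1))) / (N : ℝ) ≤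
        ricciAlpha E γ x y := by
      have hr : ricciAlpha E γ x y = 1 - Wass E γ x y / (N : ℝ) := rfl
      rw [hr, hsum, div_le_iff₀ hn0]
      have e : (1 - Wass E γ x y / (N : ℝ)) * (N : ℝ) = (N : ℝ) - Wass E γ x y := by
        field_simp
      rw [e]
      linarith
    calc F γ = ((∑ i ∈ Finset.range N, ricciAlpha E γ (f i) (f (i+1))) / (1-γ)) / (N : ℝ) := by
          show (∑ i ∈ Finset.range N, ricciAlpha E γ (f i) (f (i+1)) / (1-γ)) / (N : ℝ) = _
          rw [← Finset.sum_div]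
      _ = ((∑ i ∈ Finset.range N, ricciAlpha E γ (f i) (f (i+1))) / (N : ℝ)) / (1-γ) :=
          div_right_comm _ _ _
      _ ≤ ricciAlpha E γ x y / (1-γ) := by gcongr
  have hlimF : Tendsto F (𝓝[<] (1:ℝ)) (𝓝 ((∑ i ∈ Finset.range N, k i) / (N : ℝ))) := by
    apply Tendsto.div_const
    exact tendsto_finset_sum _ fun i hi => (hk i (Finset.mem_range.1 hi)).1
  have hle : (∑ i ∈ Finset.range N, k i) / (N : ℝ) ≤ sSup (g '' Set.Ioo 0 1) := by
    refine le_of_tendsto_of_tendsto hlimF htend ?_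
    filter_upwards [Ioo_mem_nhdsLT_of_mem (show (1:ℝ) ∈ Set.Ioc (0:ℝ) 1 by norm_num)] with γ hγ
    exact hpt γ hγ
  have hκ : κ₀ ≤ (∑ i ∈ Finset.range N, k i) / (N : ℝ) := by
    rw [le_div_iff₀ hn0]
    calc κ₀ * (N : ℝ) = ∑ _i ∈ Finset.range N, κ₀ := by
          rw [Finset.sum_const, Finset.card_range, nsmul_eq_mul]; ring
      _ ≤ ∑ i ∈ Finset.range N, k i :=
          Finset.sum_le_sum fun i hi => (hk i (Finset.mem_range.1 hi)).2
  linarith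

end

theorem stmt_4 (E : V → V → Prop) (hlf : LocFin E) (hs : NoLoops E) (hsc : StronglyConnected E) (κ₀ : ℝ)
    (h : ∀ u v : V, E u v → ∃ k : ℝ, RicciTendsto E u v k ∧ κ₀ ≤ k) :
    ∀ x y : V, x ≠ y →
      (∃ n, 1 ≤ n ∧ ∃ f : ℕ → V, f 0 = x ∧ f n = y ∧ IsDiWalk E n f) →
      ∃ k : ℝ, RicciTendsto E x y k ∧ κ₀ ≤ k :=
  stmt_4' E hlf hs hsc κ₀ h
end
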